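/- arXiv:2507.12117 — 5 statements merged into one kernel-verified Lean document; each statement's English description precedes it below -/
import Mathlib

section
/- Fix s ∈ [−1,1] and μ ∈ {x,y,z}. For every 2×2 complex matrix ρ, the one-qubit moment generating function in the direction μ, g(t) = ∫₀^{2π}∫₀^π Tr[ρ Δ^{(s)}(θ,φ)] · exp( t·n_μ(θ,φ) ) sinθ dθ dφ, is differentiable at t = 0 with g'(0) = (3^{(1+s)/2}/3)·Tr(ρ σ_μ); equivalently Tr(ρσ_μ) = (3/λ(s))·g'(0) with λ(s) = 3^{(1+s)/2}. -/
open Matrix Complex Real MeasureTheory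

noncomputable section

/-- The spin coherent state |θ,φ⟩ = cos(θ/2)|0⟩ + e^{iφ} sin(θ/2)|1⟩. -/
def cohVec (θ φ : ℝ) : Fin 2 → ℂ :=
  ![((Real.cos (θ / 2) : ℝ) : ℂ),
    Complex.exp (Complex.I * (φ : ℂ)) * ((Real.sin (θ / 2) : ℝ) : ℂ)]

/-- λ(s) = 3^{(1+s)/2}. -/
def lam (s : ℝ) : ℝ := (3 : ℝ) ^ ((1 + s) / 2)

/-- The s-parametrized Stratonovich–Weyl kernel
Δ^{(s)}(θ,φ) = (1/(2π))·( λ(s) |θ,φ⟩⟨θ,φ| − ((λ(s) − 1)/2)·I₂ ). -/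
def swKernel (s θ φ : ℝ) : Matrix (Fin 2) (Fin 2) ℂ :=
  ((1 / (2 * Real.pi) : ℝ) : ℂ) •
    (((lam s : ℝ) : ℂ) • Matrix.of (fun k l => cohVec θ φ k * (starRingEnd ℂ) (cohVec θ φ l))
      - (((lam s - 1) / 2 : ℝ) : ℂ) • (1 : Matrix (Fin 2) (Fin 2) ℂ))

def σx : Matrix (Fin 2) (Fin 2) ℂ := !![0, 1; 1, 0]
def σy : Matrix (Fin 2) (Fin 2) ℂ := !![0, -Complex.I; Complex.I, 0]
def σz : Matrix (Fin 2) (Fin 2) ℂ := !![1, 0; 0, -1]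

/-- The Pauli matrices indexed by the directions x, y, z. -/
def pauli3 : Fin 3 → Matrix (Fin 2) (Fin 2) ℂ := ![σx, σy, σz]

/-- The components of the Bloch vector field n(θ,φ) = (sinθcosφ, sinθsinφ, cosθ). -/
def blochComp : Fin 3 → ℝ → ℝ → ℝ :=
  ![fun θ φ => Real.sin θ * Real.cos φ,
    fun θ φ => Real.sin θ * Real.sin φ,
    fun θ _ => Real.cos θ]

lemma trace_formula (s θ φ : ℝ) (ρ : Matrix (Fin 2) (Fin 2) ℂ) :
    Matrix.trace (ρ * swKernel s θ φ) =
      ((1 / (4 * Real.pi) : ℝ) : ℂ) *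
        (Matrix.trace ρ + ((lam s : ℝ) : ℂ) *
          (((Real.sin θ * Real.cos φ : ℝ) : ℂ) * Matrix.trace (ρ * σx)
           + ((Real.sin θ * Real.sin φ : ℝ) : ℂ) * Matrix.trace (ρ * σy)
           + ((Real.cos θ : ℝ) : ℂ) * Matrix.trace (ρ * σz))) := by
  have hc2 : (Real.cos (θ/2) : ℂ) * (Real.cos (θ/2) : ℂ) = (1 + Real.cos θ)/2 := by
    rw [← Complex.ofReal_mul]
    norm_cast
    rw [show θ = 2 * (θ/2) by ring, Real.cos_two_mul]
    ring
  have hs2 : (Real.sin (θ/2) : ℂ) * (Real.sin (θ/2) : ℂ) = (1 - Real.cos θ)/2 := by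
    rw [← Complex.ofReal_mul]
    norm_cast
    rw [show θ = 2 * (θ/2) by ring, Real.cos_two_mul, ← Real.sin_sq_add_cos_sq (θ/2)]
    ring
  have hsc : (Real.sin (θ/2) : ℂ) * (Real.cos (θ/2) : ℂ) = (Real.sin θ)/2 := by
    rw [← Complex.ofReal_mul]
    norm_cast
    rw [show θ = 2 * (θ/2) by ring, Real.sin_two_mul]
    ring
  have hexp : Complex.exp (Complex.I * (φ:ℂ)) = Real.cos φ + Real.sin φ * Complex.I := by
    rw [mul_comm, Complex.exp_mul_I]; norm_cast
  have hpi : (Real.pi : ℂ) ≠ 0 := by exact_mod_cast Real.pi_ne_zero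
  simp only [Matrix.trace_fin_two, Matrix.mul_apply, Fin.sum_univ_two, swKernel, cohVec, σx, σy, σz,
    Matrix.smul_apply, Matrix.sub_apply, Matrix.of_apply, Matrix.one_apply, Matrix.cons_val_zero,
    Matrix.cons_val_one, Matrix.head_cons, Matrix.head_fin_const, _root_.map_mul, Complex.conj_ofReal,
    ← Complex.exp_conj, Complex.conj_I, map_ofNat,
    Matrix.cons_val', Matrix.empty_val', Matrix.cons_val_fin_one]
  have hexp' : Complex.exp (-Complex.I * (φ:ℂ)) = Real.cos φ - Real.sin φ * Complex.I := by
    rw [show -Complex.I * (φ:ℂ) = (-φ:ℝ) * Complex.I by push_cast; ring, Complex.exp_mul_I]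
    push_cast; simp [Real.cos_neg, Real.sin_neg]; ring
  have hphi : ((Real.cos φ : ℂ))^2 + ((Real.sin φ : ℂ))^2 = 1 := by
    norm_cast; exact Real.cos_sq_add_sin_sq φ
  rw [hexp, hexp']
  set a := ρ 0 0; set b := ρ 0 1; set c := ρ 1 0; set d := ρ 1 1
  simp only [smul_eq_mul, if_true, if_false, one_ne_zero, zero_ne_one, reduceIte]
  push_cast
  push_cast at hc2 hs2 hsc hphi
  linear_combination (a * ((lam s : ℝ):ℂ) / (2*(Real.pi:ℂ))) * hc2
    + (((lam s : ℝ):ℂ) * d * (Complex.cos (φ:ℂ)^2 + Complex.sin (φ:ℂ)^2) / (2*(Real.pi:ℂ))) * hs2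
    + (((lam s : ℝ):ℂ) * ((b + c) * Complex.cos (φ:ℂ) + (b - c) * Complex.sin (φ:ℂ) * Complex.I) / (2*(Real.pi:ℂ))) * hsc
    + (((lam s : ℝ):ℂ) * d * (1 - Complex.cos (θ:ℂ)) / (4*(Real.pi:ℂ))) * hphi
    + (-(((lam s : ℝ):ℂ) * d * Complex.sin (φ:ℂ)^2 * Complex.sin ((θ:ℂ)/2)^2) / (2*(Real.pi:ℂ))) * Complex.I_sq

/-- Linearity helper: integral of a 3-term complex combination of real functions. -/
lemma comb3 (a b : ℝ) (c₁ c₂ c₃ : ℂ) (f₁ f₂ f₃ : ℝ → ℝ)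
    (h₁ : Continuous f₁) (h₂ : Continuous f₂) (h₃ : Continuous f₃) :
    (∫ x in a..b, (c₁ * ((f₁ x : ℝ) : ℂ) + c₂ * ((f₂ x : ℝ) : ℂ) + c₃ * ((f₃ x : ℝ) : ℂ)))
      = c₁ * ((∫ x in a..b, f₁ x : ℝ) : ℂ) + c₂ * ((∫ x in a..b, f₂ x : ℝ) : ℂ)
        + c₃ * ((∫ x in a..b, f₃ x : ℝ) : ℂ) := by
  have i₁ : IntervalIntegrable (fun x => c₁ * ((f₁ x : ℝ) : ℂ)) volume a b :=
    (continuous_const.mul (Complex.continuous_ofReal.comp h₁)).intervalIntegrable _ _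
  have i₂ : IntervalIntegrable (fun x => c₂ * ((f₂ x : ℝ) : ℂ)) volume a b :=
    (continuous_const.mul (Complex.continuous_ofReal.comp h₂)).intervalIntegrable _ _
  have i₃ : IntervalIntegrable (fun x => c₃ * ((f₃ x : ℝ) : ℂ)) volume a b :=
    (continuous_const.mul (Complex.continuous_ofReal.comp h₃)).intervalIntegrable _ _
  rw [intervalIntegral.integral_add (i₁.add i₂) i₃, intervalIntegral.integral_add i₁ i₂,
    intervalIntegral.integral_const_mul, intervalIntegral.integral_const_mul,
    intervalIntegral.integral_const_mul, intervalIntegral.integral_ofReal,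
    intervalIntegral.integral_ofReal, intervalIntegral.integral_ofReal]

/-- Differentiation under the double integral. -/
lemma main_aux (n : ℝ → ℝ → ℝ) (C : ℝ → ℝ → ℂ) (K : ℝ)
    (hC_cont : Continuous fun p : ℝ × ℝ => C p.1 p.2)
    (hn_cont : Continuous fun p : ℝ × ℝ => n p.1 p.2)
    (hn_le : ∀ θ φ, |n θ φ| ≤ 1) (hK : ∀ θ φ, ‖C θ φ‖ ≤ K) :
    HasDerivAt
      (fun t : ℝ => ∫ φ in (0:ℝ)..(2 * Real.pi), ∫ θ in (0:ℝ)..Real.pi,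
        C θ φ * ((Real.exp (t * n θ φ) : ℝ) : ℂ) * ((Real.sin θ : ℝ) : ℂ))
      (∫ φ in (0:ℝ)..(2 * Real.pi), ∫ θ in (0:ℝ)..Real.pi,
        C θ φ * ((n θ φ : ℝ) : ℂ) * ((Real.exp ((0:ℝ) * n θ φ) : ℝ) : ℂ) * ((Real.sin θ : ℝ) : ℂ)) 0 := by
  have hK0 : 0 ≤ K := le_trans (norm_nonneg _) (hK 0 0)
  -- continuity facts
  have hCθ : ∀ φ, Continuous fun θ => C θ φ := fun φ =>
    hC_cont.comp (continuous_id.prodMk continuous_const)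
  have hnθ : ∀ φ, Continuous fun θ => n θ φ := fun φ =>
    hn_cont.comp (continuous_id.prodMk continuous_const)
  have hFcont : ∀ (u φ : ℝ), Continuous fun θ =>
      C θ φ * ((Real.exp (u * n θ φ) : ℝ) : ℂ) * ((Real.sin θ : ℝ) : ℂ) := fun u φ =>
    ((hCθ φ).mul (Complex.continuous_ofReal.comp
      (Real.continuous_exp.comp (continuous_const.mul (hnθ φ))))).mul
      (Complex.continuous_ofReal.comp Real.continuous_sin)
  have hF'cont : ∀ (u φ : ℝ), Continuous fun θ =>
      C θ φ * ((n θ φ : ℝ) : ℂ) * ((Real.exp (u * n θ φ) : ℝ) : ℂ) * ((Real.sin θ : ℝ) : ℂ) :=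
    fun u φ =>
    (((hCθ φ).mul (Complex.continuous_ofReal.comp (hnθ φ))).mul
      (Complex.continuous_ofReal.comp
        (Real.continuous_exp.comp (continuous_const.mul (hnθ φ))))).mul
      (Complex.continuous_ofReal.comp Real.continuous_sin)
  -- pointwise derivative
  have hderiv : ∀ (u φ θ : ℝ),
      HasDerivAt (fun t : ℝ => C θ φ * ((Real.exp (t * n θ φ) : ℝ) : ℂ) * ((Real.sin θ : ℝ) : ℂ))
        (C θ φ * ((n θ φ : ℝ) : ℂ) * ((Real.exp (u * n θ φ) : ℝ) : ℂ) * ((Real.sin θ : ℝ) : ℂ))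
        u := by
    intro u φ θ
    have h1 : HasDerivAt (fun t : ℝ => Real.exp (t * n θ φ))
        (Real.exp (u * n θ φ) * n θ φ) u := (hasDerivAt_mul_const (n θ φ)).exp
    have h2 := (h1.ofReal_comp.const_mul (C θ φ)).mul_const ((Real.sin θ : ℝ) : ℂ)
    refine h2.congr_deriv ?_
    push_cast
    ring
  -- norm bound on the derivative integrand
  have hbnd : ∀ (u θ φ : ℝ), |u| ≤ 2 →
      ‖C θ φ * ((n θ φ : ℝ) : ℂ) * ((Real.exp (u * n θ φ) : ℝ) : ℂ) * ((Real.sin θ : ℝ) : ℂ)‖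
        ≤ K * Real.exp 2 := by
    intro u θ φ hu
    have he : Real.exp (u * n θ φ) ≤ Real.exp 2 := by
      apply Real.exp_le_exp.2
      calc u * n θ φ ≤ |u * n θ φ| := le_abs_self _
        _ = |u| * |n θ φ| := abs_mul _ _
        _ ≤ 2 * 1 := by
            apply mul_le_mul hu (hn_le θ φ) (abs_nonneg _) (by norm_num)
        _ = 2 := by norm_num
    rw [norm_mul, norm_mul, norm_mul, Complex.norm_real, Complex.norm_real, Complex.norm_real,
      Real.norm_eq_abs, Real.norm_eq_abs, Real.norm_eq_abs, abs_of_pos (Real.exp_pos _)]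
    calc ‖C θ φ‖ * |n θ φ| * Real.exp (u * n θ φ) * |Real.sin θ|
        ≤ K * 1 * Real.exp 2 * 1 := by
          apply mul_le_mul _ (Real.abs_sin_le_one θ) (abs_nonneg _)
          · positivity
          apply mul_le_mul _ he (Real.exp_pos _).le (by positivity)
          exact mul_le_mul (hK θ φ) (hn_le θ φ) (abs_nonneg _) hK0
      _ = K * Real.exp 2 := by ring
  -- inner derivative
  have hInner : ∀ (t : ℝ), t ∈ Metric.ball (0:ℝ) 1 → ∀ φ,
      HasDerivAt
        (fun u => ∫ θ in (0:ℝ)..Real.pi,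
          C θ φ * ((Real.exp (u * n θ φ) : ℝ) : ℂ) * ((Real.sin θ : ℝ) : ℂ))
        (∫ θ in (0:ℝ)..Real.pi,
          C θ φ * ((n θ φ : ℝ) : ℂ) * ((Real.exp (t * n θ φ) : ℝ) : ℂ) * ((Real.sin θ : ℝ) : ℂ))
        t := by
    intro t ht φ
    have ht1 : |t| < 1 := by simpa [Real.dist_eq] using Metric.mem_ball.mp ht
    refine (intervalIntegral.hasDerivAt_integral_of_dominated_loc_of_deriv_le
      (F := fun u θ => C θ φ * ((Real.exp (u * n θ φ) : ℝ) : ℂ) * ((Real.sin θ : ℝ) : ℂ))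
      (F' := fun u θ =>
        C θ φ * ((n θ φ : ℝ) : ℂ) * ((Real.exp (u * n θ φ) : ℝ) : ℂ) * ((Real.sin θ : ℝ) : ℂ))
      (bound := fun _ => K * Real.exp 2) (Metric.ball_mem_nhds _ one_pos) ?_ ?_ ?_ ?_ ?_ ?_).2
    · exact Filter.Eventually.of_forall fun u => (hFcont u φ).aestronglyMeasurable
    · exact (hFcont t φ).intervalIntegrable _ _
    · exact (hF'cont t φ).aestronglyMeasurable
    · refine Filter.Eventually.of_forall fun θ _ u hu => ?_
      refine hbnd u θ φ ?_
      have : dist u t < 1 := Metric.mem_ball.mp hu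
      rw [Real.dist_eq] at this
      calc |u| = |(u - t) + t| := by ring_nf
        _ ≤ |u - t| + |t| := abs_add_le _ _
        _ ≤ 2 := by linarith
    · exact intervalIntegrable_const
    · exact Filter.Eventually.of_forall fun θ _ u _ => hderiv u φ θ
  -- outer derivative
  refine (intervalIntegral.hasDerivAt_integral_of_dominated_loc_of_deriv_le
    (μ := volume)
    (F := fun u φ => ∫ θ in (0:ℝ)..Real.pi,
      C θ φ * ((Real.exp (u * n θ φ) : ℝ) : ℂ) * ((Real.sin θ : ℝ) : ℂ))
    (F' := fun u φ => ∫ θ in (0:ℝ)..Real.pi,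
      C θ φ * ((n θ φ : ℝ) : ℂ) * ((Real.exp (u * n θ φ) : ℝ) : ℂ) * ((Real.sin θ : ℝ) : ℂ))
    (bound := fun _ => (K * Real.exp 2) * Real.pi) (a := 0) (b := 2 * Real.pi) (x₀ := (0:ℝ))
    (Metric.ball_mem_nhds _ one_pos) ?_ ?_ ?_ ?_ ?_ ?_).2
  · refine Filter.Eventually.of_forall fun u => Continuous.aestronglyMeasurable ?_
    refine intervalIntegral.continuous_parametric_intervalIntegral_of_continuous' ?_ _ _
    exact ((hC_cont.comp (continuous_snd.prodMk continuous_fst)).mul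
      (Complex.continuous_ofReal.comp (Real.continuous_exp.comp
        (continuous_const.mul (hn_cont.comp (continuous_snd.prodMk continuous_fst)))))).mul
      (Complex.continuous_ofReal.comp (Real.continuous_sin.comp continuous_snd))
  · refine Continuous.intervalIntegrable ?_ _ _
    refine intervalIntegral.continuous_parametric_intervalIntegral_of_continuous' ?_ _ _
    exact ((hC_cont.comp (continuous_snd.prodMk continuous_fst)).mul
      (Complex.continuous_ofReal.comp (Real.continuous_exp.comp
        (continuous_const.mul (hn_cont.comp (continuous_snd.prodMk continuous_fst)))))).mul
      (Complex.continuous_ofReal.comp (Real.continuous_sin.comp continuous_snd))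
  · refine Continuous.aestronglyMeasurable ?_
    refine intervalIntegral.continuous_parametric_intervalIntegral_of_continuous' ?_ _ _
    exact (((hC_cont.comp (continuous_snd.prodMk continuous_fst)).mul
      (Complex.continuous_ofReal.comp (hn_cont.comp (continuous_snd.prodMk continuous_fst)))).mul
      (Complex.continuous_ofReal.comp (Real.continuous_exp.comp
        (continuous_const.mul (hn_cont.comp (continuous_snd.prodMk continuous_fst)))))).mul
      (Complex.continuous_ofReal.comp (Real.continuous_sin.comp continuous_snd))
  · refine Filter.Eventually.of_forall fun φ _ u hu => ?_
    have hu1 : |u| < 1 := by simpa [Real.dist_eq] using Metric.mem_ball.mp hu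
    have := intervalIntegral.norm_integral_le_of_norm_le_const
      (C := K * Real.exp 2) (a := (0:ℝ)) (b := Real.pi)
      (f := fun θ => C θ φ * ((n θ φ : ℝ) : ℂ) * ((Real.exp (u * n θ φ) : ℝ) : ℂ)
        * ((Real.sin θ : ℝ) : ℂ))
      (fun θ _ => hbnd u θ φ (by linarith))
    calc ‖∫ θ in (0:ℝ)..Real.pi, C θ φ * ((n θ φ : ℝ) : ℂ) * ((Real.exp (u * n θ φ) : ℝ) : ℂ)
          * ((Real.sin θ : ℝ) : ℂ)‖ ≤ K * Real.exp 2 * |Real.pi - 0| := this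
      _ = K * Real.exp 2 * Real.pi := by
          rw [sub_zero, abs_of_pos Real.pi_pos]
  · exact intervalIntegrable_const
  · exact Filter.Eventually.of_forall fun φ _ u hu => hInner u hu φ

lemma value_aux (s : ℝ) (μ : Fin 3) (ρ : Matrix (Fin 2) (Fin 2) ℂ) :
    (∫ φ in (0:ℝ)..(2 * Real.pi), ∫ θ in (0:ℝ)..Real.pi,
      Matrix.trace (ρ * swKernel s θ φ) * ((blochComp μ θ φ : ℝ) : ℂ)
        * ((Real.exp ((0:ℝ) * blochComp μ θ φ) : ℝ) : ℂ) * ((Real.sin θ : ℝ) : ℂ))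
      = ((lam s / 3 : ℝ) : ℂ) * Matrix.trace (ρ * pauli3 μ) := by
  have I2 : ∫ x in (0:ℝ)..Real.pi, Real.sin x ^ 2 = Real.pi / 2 := by
    rw [integral_sin_sq]; simp
  have I3 : ∫ x in (0:ℝ)..Real.pi, Real.sin x ^ 3 = (4:ℝ)/3 := by
    rw [integral_sin_pow_three]; norm_num [Real.cos_pi]
  have Isc : ∫ x in (0:ℝ)..Real.pi, Real.sin x ^ 2 * Real.cos x = (0:ℝ) := by
    rw [integral_sin_sq_mul_cos]; simp
  have Imc : ∫ x in (0:ℝ)..Real.pi, Real.sin x * Real.cos x = (0:ℝ) := by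
    rw [integral_sin_mul_cos₁]; simp
  have Imc2 : ∫ x in (0:ℝ)..Real.pi, Real.sin x * Real.cos x ^ 2 = (2:ℝ)/3 := by
    rw [integral_sin_mul_cos_sq]; norm_num [Real.cos_pi]
  have J1 : ∫ x in (0:ℝ)..(2*Real.pi), Real.cos x = (0:ℝ) := by
    rw [integral_cos]; simp [Real.sin_two_pi]
  have J2 : ∫ x in (0:ℝ)..(2*Real.pi), Real.sin x = (0:ℝ) := by
    rw [integral_sin]; simp [Real.cos_two_pi]
  have Jc2 : ∫ x in (0:ℝ)..(2*Real.pi), Real.cos x ^ 2 = Real.pi := by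
    rw [integral_cos_sq]; simp [Real.sin_two_pi, Real.cos_two_pi]; try ring
  have Js2 : ∫ x in (0:ℝ)..(2*Real.pi), Real.sin x ^ 2 = Real.pi := by
    rw [integral_sin_sq]; simp [Real.sin_two_pi, Real.cos_two_pi]; try ring
  have Jsc : ∫ x in (0:ℝ)..(2*Real.pi), Real.sin x * Real.cos x = (0:ℝ) := by
    rw [integral_sin_mul_cos₁]; simp [Real.sin_two_pi]
  have hπ : ((Real.pi : ℝ) : ℂ) ≠ 0 := Complex.ofReal_ne_zero.mpr Real.pi_ne_zero
  simp only [zero_mul, Real.exp_zero, Complex.ofReal_one, mul_one]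
  fin_cases μ <;>
    simp only [blochComp, pauli3, Matrix.cons_val_zero, Matrix.cons_val_one, Matrix.head_cons,
      Fin.isValue]

  · -- μ = x
    have hinner : ∀ φ : ℝ,
        (∫ θ in (0:ℝ)..Real.pi, Matrix.trace (ρ * swKernel s θ φ)
            * ((Real.sin θ * Real.cos φ : ℝ) : ℂ) * ((Real.sin θ : ℝ) : ℂ))
        = (((1 / (4 * Real.pi) : ℝ) : ℂ) * Matrix.trace ρ * ((Real.cos φ : ℝ) : ℂ)) * ((Real.pi / 2 : ℝ) : ℂ)
          + (((1 / (4 * Real.pi) : ℝ) : ℂ) * ((lam s : ℝ) : ℂ) * (Matrix.trace (ρ * σx) * ((Real.cos φ : ℝ) : ℂ) ^ 2 + Matrix.trace (ρ * σy) * ((Real.cos φ : ℝ) : ℂ) * ((Real.sin φ : ℝ) : ℂ))) * (((4:ℝ)/3 : ℝ) : ℂ)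
          + (((1 / (4 * Real.pi) : ℝ) : ℂ) * ((lam s : ℝ) : ℂ) * Matrix.trace (ρ * σz) * ((Real.cos φ : ℝ) : ℂ)) * ((0 : ℝ) : ℂ) := by
      intro φ
      calc (∫ θ in (0:ℝ)..Real.pi, Matrix.trace (ρ * swKernel s θ φ)
            * ((Real.sin θ * Real.cos φ : ℝ) : ℂ) * ((Real.sin θ : ℝ) : ℂ))
          = ∫ θ in (0:ℝ)..Real.pi,
              ((((1 / (4 * Real.pi) : ℝ) : ℂ) * Matrix.trace ρ * ((Real.cos φ : ℝ) : ℂ)) * ((Real.sin θ ^ 2 : ℝ) : ℂ)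
              + (((1 / (4 * Real.pi) : ℝ) : ℂ) * ((lam s : ℝ) : ℂ) * (Matrix.trace (ρ * σx) * ((Real.cos φ : ℝ) : ℂ) ^ 2 + Matrix.trace (ρ * σy) * ((Real.cos φ : ℝ) : ℂ) * ((Real.sin φ : ℝ) : ℂ))) * ((Real.sin θ ^ 3 : ℝ) : ℂ)
              + (((1 / (4 * Real.pi) : ℝ) : ℂ) * ((lam s : ℝ) : ℂ) * Matrix.trace (ρ * σz) * ((Real.cos φ : ℝ) : ℂ)) * ((Real.sin θ ^ 2 * Real.cos θ : ℝ) : ℂ)) :=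
            intervalIntegral.integral_congr (fun θ _ => by rw [trace_formula]; push_cast; ring)
        _ = _ := by
            rw [comb3 _ _ _ _ _ _ _ _ (by fun_prop) (by fun_prop) (by fun_prop), I2, I3, Isc]
    calc (∫ φ in (0:ℝ)..(2*Real.pi), ∫ θ in (0:ℝ)..Real.pi, Matrix.trace (ρ * swKernel s θ φ)
            * ((Real.sin θ * Real.cos φ : ℝ) : ℂ) * ((Real.sin θ : ℝ) : ℂ))
        = ∫ φ in (0:ℝ)..(2*Real.pi),
            ((((1 / (4 * Real.pi) : ℝ) : ℂ) * Matrix.trace ρ * ((Real.pi / 2 : ℝ) : ℂ)) * ((Real.cos φ : ℝ) : ℂ)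
            + (((1 / (4 * Real.pi) : ℝ) : ℂ) * ((lam s : ℝ) : ℂ) * Matrix.trace (ρ * σx) * (((4:ℝ)/3 : ℝ) : ℂ)) * ((Real.cos φ ^ 2 : ℝ) : ℂ)
            + (((1 / (4 * Real.pi) : ℝ) : ℂ) * ((lam s : ℝ) : ℂ) * Matrix.trace (ρ * σy) * (((4:ℝ)/3 : ℝ) : ℂ)) * ((Real.sin φ * Real.cos φ : ℝ) : ℂ)) :=
          intervalIntegral.integral_congr (fun φ _ => by rw [hinner φ]; push_cast; ring)
      _ = _ := by
          rw [comb3 _ _ _ _ _ _ _ _ (by fun_prop) (by fun_prop) (by fun_prop), J1, Jc2, Jsc]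
          push_cast
          field_simp [hπ]
          ring

  · -- μ = y
    have hinner : ∀ φ : ℝ,
        (∫ θ in (0:ℝ)..Real.pi, Matrix.trace (ρ * swKernel s θ φ)
            * ((Real.sin θ * Real.sin φ : ℝ) : ℂ) * ((Real.sin θ : ℝ) : ℂ))
        = (((1 / (4 * Real.pi) : ℝ) : ℂ) * Matrix.trace ρ * ((Real.sin φ : ℝ) : ℂ)) * ((Real.pi / 2 : ℝ) : ℂ)
          + (((1 / (4 * Real.pi) : ℝ) : ℂ) * ((lam s : ℝ) : ℂ) * (Matrix.trace (ρ * σx) * ((Real.cos φ : ℝ) : ℂ) * ((Real.sin φ : ℝ) : ℂ) + Matrix.trace (ρ * σy) * ((Real.sin φ : ℝ) : ℂ) ^ 2)) * (((4:ℝ)/3 : ℝ) : ℂ)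
          + (((1 / (4 * Real.pi) : ℝ) : ℂ) * ((lam s : ℝ) : ℂ) * Matrix.trace (ρ * σz) * ((Real.sin φ : ℝ) : ℂ)) * ((0 : ℝ) : ℂ) := by
      intro φ
      calc (∫ θ in (0:ℝ)..Real.pi, Matrix.trace (ρ * swKernel s θ φ)
            * ((Real.sin θ * Real.sin φ : ℝ) : ℂ) * ((Real.sin θ : ℝ) : ℂ))
          = ∫ θ in (0:ℝ)..Real.pi,
              ((((1 / (4 * Real.pi) : ℝ) : ℂ) * Matrix.trace ρ * ((Real.sin φ : ℝ) : ℂ)) * ((Real.sin θ ^ 2 : ℝ) : ℂ)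
              + (((1 / (4 * Real.pi) : ℝ) : ℂ) * ((lam s : ℝ) : ℂ) * (Matrix.trace (ρ * σx) * ((Real.cos φ : ℝ) : ℂ) * ((Real.sin φ : ℝ) : ℂ) + Matrix.trace (ρ * σy) * ((Real.sin φ : ℝ) : ℂ) ^ 2)) * ((Real.sin θ ^ 3 : ℝ) : ℂ)
              + (((1 / (4 * Real.pi) : ℝ) : ℂ) * ((lam s : ℝ) : ℂ) * Matrix.trace (ρ * σz) * ((Real.sin φ : ℝ) : ℂ)) * ((Real.sin θ ^ 2 * Real.cos θ : ℝ) : ℂ)) :=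
            intervalIntegral.integral_congr (fun θ _ => by rw [trace_formula]; push_cast; ring)
        _ = _ := by
            rw [comb3 _ _ _ _ _ _ _ _ (by fun_prop) (by fun_prop) (by fun_prop), I2, I3, Isc]
    calc (∫ φ in (0:ℝ)..(2*Real.pi), ∫ θ in (0:ℝ)..Real.pi, Matrix.trace (ρ * swKernel s θ φ)
            * ((Real.sin θ * Real.sin φ : ℝ) : ℂ) * ((Real.sin θ : ℝ) : ℂ))
        = ∫ φ in (0:ℝ)..(2*Real.pi),
            ((((1 / (4 * Real.pi) : ℝ) : ℂ) * Matrix.trace ρ * ((Real.pi / 2 : ℝ) : ℂ)) * ((Real.sin φ : ℝ) : ℂ)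
            + (((1 / (4 * Real.pi) : ℝ) : ℂ) * ((lam s : ℝ) : ℂ) * Matrix.trace (ρ * σx) * (((4:ℝ)/3 : ℝ) : ℂ)) * ((Real.sin φ * Real.cos φ : ℝ) : ℂ)
            + (((1 / (4 * Real.pi) : ℝ) : ℂ) * ((lam s : ℝ) : ℂ) * Matrix.trace (ρ * σy) * (((4:ℝ)/3 : ℝ) : ℂ)) * ((Real.sin φ ^ 2 : ℝ) : ℂ)) :=
          intervalIntegral.integral_congr (fun φ _ => by rw [hinner φ]; push_cast; ring)
      _ = _ := by
          rw [comb3 _ _ _ _ _ _ _ _ (by fun_prop) (by fun_prop) (by fun_prop), J2, Jsc, Js2]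
          push_cast
          field_simp [hπ]
          ring

  · -- μ = z
    have hinner : ∀ φ : ℝ,
        (∫ θ in (0:ℝ)..Real.pi, Matrix.trace (ρ * swKernel s θ φ)
            * ((Real.cos θ : ℝ) : ℂ) * ((Real.sin θ : ℝ) : ℂ))
        = (((1 / (4 * Real.pi) : ℝ) : ℂ) * Matrix.trace ρ) * ((0 : ℝ) : ℂ)
          + (((1 / (4 * Real.pi) : ℝ) : ℂ) * ((lam s : ℝ) : ℂ) * (Matrix.trace (ρ * σx) * ((Real.cos φ : ℝ) : ℂ) + Matrix.trace (ρ * σy) * ((Real.sin φ : ℝ) : ℂ))) * ((0 : ℝ) : ℂ)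
          + (((1 / (4 * Real.pi) : ℝ) : ℂ) * ((lam s : ℝ) : ℂ) * Matrix.trace (ρ * σz)) * (((2:ℝ)/3 : ℝ) : ℂ) := by
      intro φ
      calc (∫ θ in (0:ℝ)..Real.pi, Matrix.trace (ρ * swKernel s θ φ)
            * ((Real.cos θ : ℝ) : ℂ) * ((Real.sin θ : ℝ) : ℂ))
          = ∫ θ in (0:ℝ)..Real.pi,
              ((((1 / (4 * Real.pi) : ℝ) : ℂ) * Matrix.trace ρ) * ((Real.sin θ * Real.cos θ : ℝ) : ℂ)
              + (((1 / (4 * Real.pi) : ℝ) : ℂ) * ((lam s : ℝ) : ℂ) * (Matrix.trace (ρ * σx) * ((Real.cos φ : ℝ) : ℂ) + Matrix.trace (ρ * σy) * ((Real.sin φ : ℝ) : ℂ))) * ((Real.sin θ ^ 2 * Real.cos θ : ℝ) : ℂ)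
              + (((1 / (4 * Real.pi) : ℝ) : ℂ) * ((lam s : ℝ) : ℂ) * Matrix.trace (ρ * σz)) * ((Real.sin θ * Real.cos θ ^ 2 : ℝ) : ℂ)) :=
            intervalIntegral.integral_congr (fun θ _ => by rw [trace_formula]; push_cast; ring)
        _ = _ := by
            rw [comb3 _ _ _ _ _ _ _ _ (by fun_prop) (by fun_prop) (by fun_prop), Imc, Isc, Imc2]
    calc (∫ φ in (0:ℝ)..(2*Real.pi), ∫ θ in (0:ℝ)..Real.pi, Matrix.trace (ρ * swKernel s θ φ)
            * ((Real.cos θ : ℝ) : ℂ) * ((Real.sin θ : ℝ) : ℂ))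
        = ∫ φ in (0:ℝ)..(2*Real.pi), (((1 / (4 * Real.pi) : ℝ) : ℂ) * ((lam s : ℝ) : ℂ) * Matrix.trace (ρ * σz) * (((2:ℝ)/3 : ℝ) : ℂ)) :=
          intervalIntegral.integral_congr (fun φ _ => by rw [hinner φ]; push_cast; ring)
      _ = _ := by
          rw [intervalIntegral.integral_const]
          rw [sub_zero, Complex.real_smul]
          push_cast
          field_simp [hπ]
          ring


/-- the one-qubit moment generating function
g(t) = ∫ Tr[ρΔ^{(s)}] e^{t·n_μ} sinθ dθ dφ is differentiable at t = 0 with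
g'(0) = (λ(s)/3)·Tr(ρσ_μ). -/
theorem one_qubit_mgf_first_moment (s : ℝ) (hs : s ∈ Set.Icc (-1 : ℝ) 1)
    (μ : Fin 3) (ρ : Matrix (Fin 2) (Fin 2) ℂ) :
    HasDerivAt
      (fun t : ℝ =>
        ∫ φ in (0:ℝ)..(2 * Real.pi), ∫ θ in (0:ℝ)..Real.pi,
          Matrix.trace (ρ * swKernel s θ φ)
            * ((Real.exp (t * blochComp μ θ φ) : ℝ) : ℂ)
            * ((Real.sin θ : ℝ) : ℂ))
      (((lam s / 3 : ℝ) : ℂ) * Matrix.trace (ρ * pauli3 μ)) 0 := by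
  have hL : (0:ℝ) < lam s := Real.rpow_pos_of_pos (by norm_num) _
  have habs1 : ∀ x y : ℝ, |Real.sin x * Real.cos y| ≤ 1 := by
    intro x y
    rw [abs_mul]
    simpa using mul_le_mul (Real.abs_sin_le_one x) (Real.abs_cos_le_one y) (abs_nonneg _)
      zero_le_one
  have habs2 : ∀ x y : ℝ, |Real.sin x * Real.sin y| ≤ 1 := by
    intro x y
    rw [abs_mul]
    simpa using mul_le_mul (Real.abs_sin_le_one x) (Real.abs_sin_le_one y) (abs_nonneg _)
      zero_le_one
  have hn_le : ∀ θ φ, |blochComp μ θ φ| ≤ 1 := by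
    intro θ φ
    fin_cases μ <;> simp only [blochComp] <;> norm_num
    · rw [← abs_mul]; exact habs1 θ φ
    · rw [← abs_mul]; exact habs2 θ φ
    · exact Real.abs_cos_le_one θ
  have hn_cont : Continuous fun p : ℝ × ℝ => blochComp μ p.1 p.2 := by
    fin_cases μ <;> simp only [blochComp] <;> norm_num <;> fun_prop
  have hC_cont : Continuous fun p : ℝ × ℝ => Matrix.trace (ρ * swKernel s p.1 p.2) := by
    simp only [trace_formula]
    fun_prop
  set K : ℝ := (1 / (4 * Real.pi)) * (‖Matrix.trace ρ‖
    + lam s * (‖Matrix.trace (ρ * σx)‖ + ‖Matrix.trace (ρ * σy)‖ + ‖Matrix.trace (ρ * σz)‖))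
    with hKdef
  have hK : ∀ θ φ, ‖Matrix.trace (ρ * swKernel s θ φ)‖ ≤ K := by
    intro θ φ
    rw [trace_formula, hKdef]
    rw [norm_mul, Complex.norm_real, Real.norm_eq_abs,
      abs_of_pos (by positivity : (0:ℝ) < 1 / (4 * Real.pi))]
    gcongr
    refine (norm_add_le _ _).trans ?_
    gcongr
    rw [norm_mul, Complex.norm_real, Real.norm_eq_abs, abs_of_pos hL]
    gcongr
    refine (norm_add_le _ _).trans ?_
    refine add_le_add ((norm_add_le _ _).trans (add_le_add ?_ ?_)) ?_ <;>
      rw [norm_mul, Complex.norm_real, Real.norm_eq_abs]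
    · exact mul_le_of_le_one_left (norm_nonneg _) (habs1 θ φ)
    · exact mul_le_of_le_one_left (norm_nonneg _) (habs2 θ φ)
    · exact mul_le_of_le_one_left (norm_nonneg _) (Real.abs_cos_le_one θ)
  have h := main_aux (blochComp μ) (fun θ φ => Matrix.trace (ρ * swKernel s θ φ)) K
    hC_cont hn_cont hn_le hK
  have hv := value_aux s μ ρ
  rw [← hv]
  exact h
end
end

section
/- Fix s ∈ [−1,1], N ≥ 1, and a map μ : Fin N → {x,y,z}. For every complex matrix ρ indexed by (Fin N → Fin 2), the full-weight Pauli moments are recovered from the s-parametrized phase-space function by the integral identity ∫ f^{(s)}_ρ(Ω) · ∏_{i} n_{μ(i)}(θ_i,φ_i) dΩ = (3^{(1+s)/2}/3)^N · Tr[ ρ · ⊗_{i} σ_{μ(i)} ], where f^{(s)}_ρ(Ω) = Tr[ ρ · ⊗_{i} Δ^{(s)}(θ_i,φ_i) ], the integral is over the product of N spheres with measure ∏_i sinθ_i dθ_i dφ_i, and ⊗_i σ_{μ(i)} is the matrix with entries ∏_i σ_{μ(i)}(b(i),b'(i)). -/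
open Matrix Complex Real MeasureTheory

noncomputable section

/-- The N-qubit s-parametrized phase-space function
f^{(s)}_ρ(Ω) = Tr[ρ · ⊗ᵢ Δ^{(s)}(θᵢ,φᵢ)], where a point of one sphere is a pair
(θ, φ) : ℝ × ℝ. -/
def fS (N : ℕ) (s : ℝ) (ρ : Matrix (Fin N → Fin 2) (Fin N → Fin 2) ℂ)
    (Ω : Fin N → ℝ × ℝ) : ℂ :=
  Matrix.trace (ρ * Matrix.of (fun b b' => ∏ i, swKernel s (Ω i).1 (Ω i).2 (b i) (b' i)))

/-- The measure dθ dφ on one sphere's coordinate chart [0,π] × [0,2π]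
(the sinθ weight is put into the integrand below). -/
def chartMeasure : Measure (ℝ × ℝ) :=
  (volume.restrict (Set.Icc (0:ℝ) Real.pi)).prod
    (volume.restrict (Set.Icc (0:ℝ) (2 * Real.pi)))

set_option maxHeartbeats 1000000

/-! ### Auxiliary lemmas -/

lemma myexp (φ : ℝ) : Complex.exp (Complex.I * φ)
    = ((Real.cos φ : ℝ) : ℂ) + ((Real.sin φ : ℝ):ℂ) * Complex.I := by
  rw [mul_comm, Complex.exp_mul_I]; simp [← Complex.ofReal_cos, ← Complex.ofReal_sin]

lemma eU (φ : ℝ) :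
    Complex.exp (Complex.I * φ) * (starRingEnd ℂ) (Complex.exp (Complex.I * φ)) = 1 := by
  rw [← Complex.exp_conj, ← Complex.exp_add]
  simp

lemma e00 (θ φ : ℝ) : cohVec θ φ 0 * (starRingEnd ℂ) (cohVec θ φ 0)
    = ((Real.cos (θ/2) * Real.cos (θ/2) : ℝ) : ℂ) := by
  simp only [cohVec, Matrix.cons_val_zero, Complex.conj_ofReal]
  push_cast; ring

lemma e01 (θ φ : ℝ) : cohVec θ φ 0 * (starRingEnd ℂ) (cohVec θ φ 1)
    = (((Real.cos φ : ℝ):ℂ) - ((Real.sin φ : ℝ):ℂ) * Complex.I)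
      * ((Real.cos (θ/2) * Real.sin (θ/2) : ℝ) : ℂ) := by
  simp only [cohVec, Matrix.cons_val_zero, Matrix.cons_val_one, Matrix.head_cons,
    _root_.map_mul, _root_.map_add, Complex.conj_I, Complex.conj_ofReal, myexp]
  push_cast; ring

lemma e10 (θ φ : ℝ) : cohVec θ φ 1 * (starRingEnd ℂ) (cohVec θ φ 0)
    = (((Real.cos φ : ℝ):ℂ) + ((Real.sin φ : ℝ):ℂ) * Complex.I)
      * ((Real.cos (θ/2) * Real.sin (θ/2) : ℝ) : ℂ) := by
  simp only [cohVec, Matrix.cons_val_zero, Matrix.cons_val_one, Matrix.head_cons,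
    _root_.map_mul, _root_.map_add, Complex.conj_I, Complex.conj_ofReal, myexp]
  push_cast; ring

lemma e11 (θ φ : ℝ) : cohVec θ φ 1 * (starRingEnd ℂ) (cohVec θ φ 1)
    = ((Real.sin (θ/2) * Real.sin (θ/2) : ℝ) : ℂ) := by
  simp only [cohVec, Matrix.cons_val_one, Matrix.cons_val_zero, Matrix.head_cons, _root_.map_mul, Complex.conj_ofReal]
  rw [Complex.ofReal_mul]
  linear_combination (((Real.sin (θ/2) : ℝ):ℂ) * ((Real.sin (θ/2) : ℝ):ℂ)) * eU φ

/-! ### Integration helpers -/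

lemma integrable_chart {f : ℝ × ℝ → ℂ} (hf : Continuous f) : Integrable f chartMeasure := by
  unfold chartMeasure
  rw [Measure.prod_restrict, ← Measure.volume_eq_prod]
  exact hf.continuousOn.integrableOn_compact (isCompact_Icc.prod isCompact_Icc)

lemma restrict_Icc_eq (a b : ℝ) (h : a ≤ b) (f : ℝ → ℂ) :
    ∫ x, f x ∂(volume.restrict (Set.Icc a b)) = ∫ x in a..b, f x := by
  rw [intervalIntegral.integral_of_le h]
  exact MeasureTheory.integral_Icc_eq_integral_Ioc

lemma key (f g : ℝ → ℂ) :
    ∫ p : ℝ × ℝ, f p.1 * g p.2 ∂chartMeasure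
      = (∫ θ in (0:ℝ)..Real.pi, f θ) * ∫ φ in (0:ℝ)..(2*Real.pi), g φ := by
  unfold chartMeasure
  rw [MeasureTheory.integral_prod_mul,
    restrict_Icc_eq _ _ Real.pi_nonneg,
    restrict_Icc_eq _ _ (by positivity)]

/-! ### One-dimensional integrals: φ side -/

lemma philem (u v : ℝ → ℝ) (hu : Continuous u) (hv : Continuous v) :
    ∫ φ in (0:ℝ)..(2*Real.pi), (((u φ :ℝ):ℂ) + ((v φ:ℝ):ℂ) * Complex.I)
      = ((∫ φ in (0:ℝ)..(2*Real.pi), u φ : ℝ) : ℂ)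
        + ((∫ φ in (0:ℝ)..(2*Real.pi), v φ : ℝ) : ℂ) * Complex.I := by
  rw [intervalIntegral.integral_add
      ((by fun_prop : Continuous fun φ:ℝ => ((u φ:ℝ):ℂ)).intervalIntegrable _ _)
      ((by fun_prop : Continuous fun φ:ℝ => ((v φ:ℝ):ℂ) * Complex.I).intervalIntegrable _ _),
    intervalIntegral.integral_mul_const, intervalIntegral.integral_ofReal,
    intervalIntegral.integral_ofReal]

lemma pcos : ∫ φ in (0:ℝ)..(2*Real.pi), ((Real.cos φ : ℝ):ℂ) = 0 := by
  rw [intervalIntegral.integral_ofReal, integral_cos]; simp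

lemma psin : ∫ φ in (0:ℝ)..(2*Real.pi), ((Real.sin φ : ℝ):ℂ) = 0 := by
  rw [intervalIntegral.integral_ofReal, integral_sin]; simp

lemma pone : ∫ _ in (0:ℝ)..(2*Real.pi), (1:ℂ) = ((2*Real.pi : ℝ) : ℂ) := by
  simp

lemma pEcos : ∫ φ in (0:ℝ)..(2*Real.pi),
    (((Real.cos φ : ℝ):ℂ) + ((Real.sin φ:ℝ):ℂ) * Complex.I) * ((Real.cos φ : ℝ):ℂ)
    = ((Real.pi : ℝ) : ℂ) := by
  have : (fun φ : ℝ => (((Real.cos φ : ℝ):ℂ) + ((Real.sin φ:ℝ):ℂ) * Complex.I) * ((Real.cos φ : ℝ):ℂ))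
      = fun φ => (((Real.cos φ ^ 2 : ℝ):ℂ) + ((Real.sin φ * Real.cos φ :ℝ):ℂ) * Complex.I) := by
    funext φ; push_cast; ring
  rw [this, philem _ _ (by continuity) (by continuity), integral_cos_sq, integral_sin_mul_cos₁]
  simp

lemma pEcos' : ∫ φ in (0:ℝ)..(2*Real.pi),
    (((Real.cos φ : ℝ):ℂ) - ((Real.sin φ:ℝ):ℂ) * Complex.I) * ((Real.cos φ : ℝ):ℂ)
    = ((Real.pi : ℝ) : ℂ) := by
  have : (fun φ : ℝ => (((Real.cos φ : ℝ):ℂ) - ((Real.sin φ:ℝ):ℂ) * Complex.I) * ((Real.cos φ : ℝ):ℂ))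
      = fun φ => (((Real.cos φ ^ 2 : ℝ):ℂ) + ((-(Real.sin φ * Real.cos φ) :ℝ):ℂ) * Complex.I) := by
    funext φ; push_cast; ring
  rw [this, philem _ _ (by continuity) (by continuity), integral_cos_sq]
  have : ∫ φ in (0:ℝ)..(2*Real.pi), -(Real.sin φ * Real.cos φ)
      = -∫ φ in (0:ℝ)..(2*Real.pi), Real.sin φ * Real.cos φ := intervalIntegral.integral_neg
  rw [this, integral_sin_mul_cos₁]
  simp

lemma pEsin : ∫ φ in (0:ℝ)..(2*Real.pi),
    (((Real.cos φ : ℝ):ℂ) + ((Real.sin φ:ℝ):ℂ) * Complex.I) * ((Real.sin φ : ℝ):ℂ)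
    = ((Real.pi : ℝ) : ℂ) * Complex.I := by
  have : (fun φ : ℝ => (((Real.cos φ : ℝ):ℂ) + ((Real.sin φ:ℝ):ℂ) * Complex.I) * ((Real.sin φ : ℝ):ℂ))
      = fun φ => (((Real.sin φ * Real.cos φ : ℝ):ℂ) + ((Real.sin φ ^2 :ℝ):ℂ) * Complex.I) := by
    funext φ; push_cast; ring
  rw [this, philem _ _ (by continuity) (by continuity), integral_sin_sq, integral_sin_mul_cos₁]
  simp

lemma pEsin' : ∫ φ in (0:ℝ)..(2*Real.pi),
    (((Real.cos φ : ℝ):ℂ) - ((Real.sin φ:ℝ):ℂ) * Complex.I) * ((Real.sin φ : ℝ):ℂ)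
    = -(((Real.pi : ℝ) : ℂ) * Complex.I) := by
  have : (fun φ : ℝ => (((Real.cos φ : ℝ):ℂ) - ((Real.sin φ:ℝ):ℂ) * Complex.I) * ((Real.sin φ : ℝ):ℂ))
      = fun φ => (((Real.sin φ * Real.cos φ : ℝ):ℂ) + ((-(Real.sin φ ^2) :ℝ):ℂ) * Complex.I) := by
    funext φ; push_cast; ring
  rw [this, philem _ _ (by continuity) (by continuity)]
  have h2 : ∫ φ in (0:ℝ)..(2*Real.pi), -(Real.sin φ ^2)
      = -∫ φ in (0:ℝ)..(2*Real.pi), Real.sin φ ^2 := intervalIntegral.integral_neg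
  rw [h2, integral_sin_sq, integral_sin_mul_cos₁]
  simp

lemma pEone : ∫ φ in (0:ℝ)..(2*Real.pi),
    (((Real.cos φ : ℝ):ℂ) + ((Real.sin φ:ℝ):ℂ) * Complex.I) = 0 := by
  rw [philem _ _ (by continuity) (by continuity), integral_sin, integral_cos]; simp

lemma pEone' : ∫ φ in (0:ℝ)..(2*Real.pi),
    (((Real.cos φ : ℝ):ℂ) - ((Real.sin φ:ℝ):ℂ) * Complex.I) = 0 := by
  have : (fun φ:ℝ => (((Real.cos φ : ℝ):ℂ) - ((Real.sin φ:ℝ):ℂ) * Complex.I))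
      = fun φ => (((Real.cos φ : ℝ):ℂ) + ((-Real.sin φ:ℝ):ℂ) * Complex.I) := by
    funext φ; push_cast; ring
  rw [this, philem _ _ (by continuity) (by continuity), integral_cos]
  have : ∫ φ in (0:ℝ)..(2*Real.pi), -Real.sin φ = -∫ φ in (0:ℝ)..(2*Real.pi), Real.sin φ :=
    intervalIntegral.integral_neg
  rw [this, integral_sin]; simp

/-! ### One-dimensional integrals: θ side -/

lemma rTA : ∫ θ in (0:ℝ)..Real.pi,
    Real.cos (θ/2) * Real.sin (θ/2) * (Real.sin θ * Real.sin θ) = 2/3 := by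
  have : ∀ θ : ℝ, Real.cos (θ/2) * Real.sin (θ/2) * (Real.sin θ * Real.sin θ)
      = (1/2) * Real.sin θ ^ 3 := by
    intro θ
    have h : Real.sin θ = 2 * Real.sin (θ/2) * Real.cos (θ/2) := by
      rw [← Real.sin_two_mul]; ring_nf
    linear_combination (-(Real.sin θ^2)/2) * h
  simp only [this]
  rw [intervalIntegral.integral_const_mul, integral_sin_pow_three]
  simp [Real.cos_pi]
  norm_num

lemma rTB : ∫ θ in (0:ℝ)..Real.pi,
    Real.cos (θ/2) * Real.cos (θ/2) * (Real.cos θ * Real.sin θ) = 1/3 := by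
  have : ∀ θ : ℝ, Real.cos (θ/2) * Real.cos (θ/2) * (Real.cos θ * Real.sin θ)
      = (1/2) * (Real.sin θ * Real.cos θ) + (1/2) * (Real.sin θ * Real.cos θ ^2) := by
    intro θ
    have h := Real.cos_sq (θ/2)
    rw [show 2*(θ/2) = θ by ring] at h
    linear_combination (Real.cos θ * Real.sin θ) * h
  simp only [this]
  rw [intervalIntegral.integral_add ((by continuity : Continuous fun θ:ℝ => (1/2) * (Real.sin θ * Real.cos θ)).intervalIntegrable _ _) ((by continuity : Continuous fun θ:ℝ => (1/2) * (Real.sin θ * Real.cos θ^2)).intervalIntegrable _ _), intervalIntegral.integral_const_mul, intervalIntegral.integral_const_mul, integral_sin_mul_cos₁, integral_sin_mul_cos_sq]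
  simp [Real.cos_pi]
  norm_num

lemma rTC : ∫ θ in (0:ℝ)..Real.pi,
    Real.sin (θ/2) * Real.sin (θ/2) * (Real.cos θ * Real.sin θ) = -(1/3) := by
  have : ∀ θ : ℝ, Real.sin (θ/2) * Real.sin (θ/2) * (Real.cos θ * Real.sin θ)
      = (1/2) * (Real.sin θ * Real.cos θ) - (1/2) * (Real.sin θ * Real.cos θ ^2) := by
    intro θ
    have h := Real.cos_sq (θ/2)
    rw [show 2*(θ/2) = θ by ring] at h
    have h2 := Real.sin_sq_add_cos_sq (θ/2)
    linear_combination (Real.cos θ * Real.sin θ) * h2 - (Real.cos θ * Real.sin θ) * h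
  simp only [this]
  rw [intervalIntegral.integral_sub ((by continuity : Continuous fun θ:ℝ => (1/2) * (Real.sin θ * Real.cos θ)).intervalIntegrable _ _) ((by continuity : Continuous fun θ:ℝ => (1/2) * (Real.sin θ * Real.cos θ^2)).intervalIntegrable _ _), intervalIntegral.integral_const_mul, intervalIntegral.integral_const_mul, integral_sin_mul_cos₁, integral_sin_mul_cos_sq]
  simp [Real.cos_pi]
  norm_num

lemma rTD : ∫ θ in (0:ℝ)..Real.pi, Real.cos θ * Real.sin θ = 0 := by
  have : (fun θ:ℝ => Real.cos θ * Real.sin θ) = fun θ => Real.sin θ * Real.cos θ := by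
    funext θ; ring
  rw [this, integral_sin_mul_cos₁]; simp

lemma tA : ∫ θ in (0:ℝ)..Real.pi,
    ((Real.cos (θ/2) * Real.sin (θ/2) * (Real.sin θ * Real.sin θ) : ℝ):ℂ) = ((2/3 : ℝ):ℂ) := by
  rw [intervalIntegral.integral_ofReal, rTA]

lemma tB : ∫ θ in (0:ℝ)..Real.pi,
    ((Real.cos (θ/2) * Real.cos (θ/2) * (Real.cos θ * Real.sin θ) : ℝ):ℂ) = ((1/3 : ℝ):ℂ) := by
  rw [intervalIntegral.integral_ofReal, rTB]

lemma tC : ∫ θ in (0:ℝ)..Real.pi,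
    ((Real.sin (θ/2) * Real.sin (θ/2) * (Real.cos θ * Real.sin θ) : ℝ):ℂ) = ((-(1/3) : ℝ):ℂ) := by
  rw [intervalIntegral.integral_ofReal, rTC]

lemma tD : ∫ θ in (0:ℝ)..Real.pi, ((Real.cos θ * Real.sin θ : ℝ):ℂ) = 0 := by
  rw [intervalIntegral.integral_ofReal, rTD]; simp

-- qubit_int cases, appended to part1 for testing
lemma qubit_int (s : ℝ) (μ : Fin 3) (k l : Fin 2) :
    ∫ p : ℝ × ℝ, swKernel s p.1 p.2 k l
        * ((blochComp μ p.1 p.2 * Real.sin p.1 : ℝ) : ℂ) ∂chartMeasure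
      = ((lam s / 3 : ℝ) : ℂ) * pauli3 μ k l := by
  have hπ := Real.pi_ne_zero
  have hπC : (Real.pi:ℂ) ≠ 0 := Complex.ofReal_ne_zero.mpr Real.pi_ne_zero
  fin_cases μ <;> fin_cases k <;> fin_cases l <;>
    simp only [show (⟨0, by norm_num⟩ : Fin 3) = 0 from rfl,
      show (⟨1, by norm_num⟩ : Fin 3) = 1 from rfl,
      show (⟨2, by norm_num⟩ : Fin 3) = 2 from rfl,
      show (⟨0, by norm_num⟩ : Fin 2) = 0 from rfl,
      show (⟨1, by norm_num⟩ : Fin 2) = 1 from rfl,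
      swKernel, Matrix.smul_apply, Matrix.sub_apply, Matrix.of_apply, Matrix.one_apply,
      smul_eq_mul, blochComp, pauli3, σx, σy, σz, Matrix.cons_val_zero, Matrix.cons_val_one,
      Matrix.head_cons, Matrix.cons_val', Matrix.head_fin_const, Matrix.cons_val_fin_one,
      Matrix.cons_val_two, Matrix.tail_cons,
      Fin.isValue, (by decide : ¬ (0:Fin 2) = 1), (by decide : ¬ (1:Fin 2) = 0),
      eq_self_iff_true, if_true, if_false, mul_zero, mul_one, sub_zero,
      e00, e01, e10, e11]
  -- x 00
  · trans ((((1/(2*Real.pi):ℝ):ℂ) * ((lam s:ℝ):ℂ)) *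
        ((∫ θ in (0:ℝ)..Real.pi, ((Real.cos (θ/2) * Real.cos (θ/2) * (Real.sin θ * Real.sin θ) : ℝ):ℂ)) *
         (∫ φ in (0:ℝ)..(2*Real.pi), ((Real.cos φ : ℝ):ℂ)))
      - (((1/(2*Real.pi):ℝ):ℂ) * (((lam s - 1)/2:ℝ):ℂ)) *
        ((∫ θ in (0:ℝ)..Real.pi, ((Real.sin θ * Real.sin θ : ℝ):ℂ)) *
         (∫ φ in (0:ℝ)..(2*Real.pi), ((Real.cos φ : ℝ):ℂ))))
    · rw [← key, ← key, ← MeasureTheory.integral_const_mul, ← MeasureTheory.integral_const_mul,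
        ← integral_sub (integrable_chart (by fun_prop)) (integrable_chart (by fun_prop))]
      exact integral_congr_ae (Filter.EventuallyEq.of_eq (funext fun p => by push_cast; ring))
    · rw [pcos]; simp
  -- x 01
  · trans ((((1/(2*Real.pi):ℝ):ℂ) * ((lam s:ℝ):ℂ)) *
        ((∫ θ in (0:ℝ)..Real.pi, ((Real.cos (θ/2) * Real.sin (θ/2) * (Real.sin θ * Real.sin θ) : ℝ):ℂ)) *
         (∫ φ in (0:ℝ)..(2*Real.pi), (((Real.cos φ:ℝ):ℂ) - ((Real.sin φ:ℝ):ℂ) * Complex.I) * ((Real.cos φ:ℝ):ℂ))))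
    · rw [← key, ← MeasureTheory.integral_const_mul]
      exact integral_congr_ae (Filter.EventuallyEq.of_eq (funext fun p => by push_cast; ring))
    · rw [tA, pEcos']; push_cast; field_simp; try ring
  -- x 10
  · trans ((((1/(2*Real.pi):ℝ):ℂ) * ((lam s:ℝ):ℂ)) *
        ((∫ θ in (0:ℝ)..Real.pi, ((Real.cos (θ/2) * Real.sin (θ/2) * (Real.sin θ * Real.sin θ) : ℝ):ℂ)) *
         (∫ φ in (0:ℝ)..(2*Real.pi), (((Real.cos φ:ℝ):ℂ) + ((Real.sin φ:ℝ):ℂ) * Complex.I) * ((Real.cos φ:ℝ):ℂ))))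
    · rw [← key, ← MeasureTheory.integral_const_mul]
      exact integral_congr_ae (Filter.EventuallyEq.of_eq (funext fun p => by push_cast; ring))
    · rw [tA, pEcos]; push_cast; field_simp; try ring
  -- x 11
  · trans ((((1/(2*Real.pi):ℝ):ℂ) * ((lam s:ℝ):ℂ)) *
        ((∫ θ in (0:ℝ)..Real.pi, ((Real.sin (θ/2) * Real.sin (θ/2) * (Real.sin θ * Real.sin θ) : ℝ):ℂ)) *
         (∫ φ in (0:ℝ)..(2*Real.pi), ((Real.cos φ : ℝ):ℂ)))
      - (((1/(2*Real.pi):ℝ):ℂ) * (((lam s - 1)/2:ℝ):ℂ)) *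
        ((∫ θ in (0:ℝ)..Real.pi, ((Real.sin θ * Real.sin θ : ℝ):ℂ)) *
         (∫ φ in (0:ℝ)..(2*Real.pi), ((Real.cos φ : ℝ):ℂ))))
    · rw [← key, ← key, ← MeasureTheory.integral_const_mul, ← MeasureTheory.integral_const_mul,
        ← integral_sub (integrable_chart (by fun_prop)) (integrable_chart (by fun_prop))]
      exact integral_congr_ae (Filter.EventuallyEq.of_eq (funext fun p => by push_cast; ring))
    · rw [pcos]; simp
  -- y 00
  · trans ((((1/(2*Real.pi):ℝ):ℂ) * ((lam s:ℝ):ℂ)) *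
        ((∫ θ in (0:ℝ)..Real.pi, ((Real.cos (θ/2) * Real.cos (θ/2) * (Real.sin θ * Real.sin θ) : ℝ):ℂ)) *
         (∫ φ in (0:ℝ)..(2*Real.pi), ((Real.sin φ : ℝ):ℂ)))
      - (((1/(2*Real.pi):ℝ):ℂ) * (((lam s - 1)/2:ℝ):ℂ)) *
        ((∫ θ in (0:ℝ)..Real.pi, ((Real.sin θ * Real.sin θ : ℝ):ℂ)) *
         (∫ φ in (0:ℝ)..(2*Real.pi), ((Real.sin φ : ℝ):ℂ))))
    · rw [← key, ← key, ← MeasureTheory.integral_const_mul, ← MeasureTheory.integral_const_mul,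
        ← integral_sub (integrable_chart (by fun_prop)) (integrable_chart (by fun_prop))]
      exact integral_congr_ae (Filter.EventuallyEq.of_eq (funext fun p => by push_cast; ring))
    · rw [psin]; simp
  -- y 01
  · trans ((((1/(2*Real.pi):ℝ):ℂ) * ((lam s:ℝ):ℂ)) *
        ((∫ θ in (0:ℝ)..Real.pi, ((Real.cos (θ/2) * Real.sin (θ/2) * (Real.sin θ * Real.sin θ) : ℝ):ℂ)) *
         (∫ φ in (0:ℝ)..(2*Real.pi), (((Real.cos φ:ℝ):ℂ) - ((Real.sin φ:ℝ):ℂ) * Complex.I) * ((Real.sin φ:ℝ):ℂ))))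
    · rw [← key, ← MeasureTheory.integral_const_mul]
      exact integral_congr_ae (Filter.EventuallyEq.of_eq (funext fun p => by push_cast; ring))
    · rw [tA, pEsin']; push_cast; field_simp; try ring
  -- y 10
  · trans ((((1/(2*Real.pi):ℝ):ℂ) * ((lam s:ℝ):ℂ)) *
        ((∫ θ in (0:ℝ)..Real.pi, ((Real.cos (θ/2) * Real.sin (θ/2) * (Real.sin θ * Real.sin θ) : ℝ):ℂ)) *
         (∫ φ in (0:ℝ)..(2*Real.pi), (((Real.cos φ:ℝ):ℂ) + ((Real.sin φ:ℝ):ℂ) * Complex.I) * ((Real.sin φ:ℝ):ℂ))))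
    · rw [← key, ← MeasureTheory.integral_const_mul]
      exact integral_congr_ae (Filter.EventuallyEq.of_eq (funext fun p => by push_cast; ring))
    · rw [tA, pEsin]; push_cast; field_simp; try ring
  -- y 11
  · trans ((((1/(2*Real.pi):ℝ):ℂ) * ((lam s:ℝ):ℂ)) *
        ((∫ θ in (0:ℝ)..Real.pi, ((Real.sin (θ/2) * Real.sin (θ/2) * (Real.sin θ * Real.sin θ) : ℝ):ℂ)) *
         (∫ φ in (0:ℝ)..(2*Real.pi), ((Real.sin φ : ℝ):ℂ)))
      - (((1/(2*Real.pi):ℝ):ℂ) * (((lam s - 1)/2:ℝ):ℂ)) *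
        ((∫ θ in (0:ℝ)..Real.pi, ((Real.sin θ * Real.sin θ : ℝ):ℂ)) *
         (∫ φ in (0:ℝ)..(2*Real.pi), ((Real.sin φ : ℝ):ℂ))))
    · rw [← key, ← key, ← MeasureTheory.integral_const_mul, ← MeasureTheory.integral_const_mul,
        ← integral_sub (integrable_chart (by fun_prop)) (integrable_chart (by fun_prop))]
      exact integral_congr_ae (Filter.EventuallyEq.of_eq (funext fun p => by push_cast; ring))
    · rw [psin]; simp
  -- z 00
  · trans ((((1/(2*Real.pi):ℝ):ℂ) * ((lam s:ℝ):ℂ)) *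
        ((∫ θ in (0:ℝ)..Real.pi, ((Real.cos (θ/2) * Real.cos (θ/2) * (Real.cos θ * Real.sin θ) : ℝ):ℂ)) *
         (∫ _ in (0:ℝ)..(2*Real.pi), (1:ℂ)))
      - (((1/(2*Real.pi):ℝ):ℂ) * (((lam s - 1)/2:ℝ):ℂ)) *
        ((∫ θ in (0:ℝ)..Real.pi, ((Real.cos θ * Real.sin θ : ℝ):ℂ)) *
         (∫ _ in (0:ℝ)..(2*Real.pi), (1:ℂ))))
    · rw [← key, ← key, ← MeasureTheory.integral_const_mul, ← MeasureTheory.integral_const_mul,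
        ← integral_sub (integrable_chart (by fun_prop)) (integrable_chart (by fun_prop))]
      exact integral_congr_ae (Filter.EventuallyEq.of_eq (funext fun p => by push_cast; ring))
    · rw [tB, tD, pone]; push_cast; field_simp; try ring
  -- z 01
  · trans ((((1/(2*Real.pi):ℝ):ℂ) * ((lam s:ℝ):ℂ)) *
        ((∫ θ in (0:ℝ)..Real.pi, ((Real.cos (θ/2) * Real.sin (θ/2) * (Real.cos θ * Real.sin θ) : ℝ):ℂ)) *
         (∫ φ in (0:ℝ)..(2*Real.pi), (((Real.cos φ:ℝ):ℂ) - ((Real.sin φ:ℝ):ℂ) * Complex.I))))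
    · rw [← key, ← MeasureTheory.integral_const_mul]
      exact integral_congr_ae (Filter.EventuallyEq.of_eq (funext fun p => by push_cast; ring))
    · rw [pEone']; simp
  -- z 10
  · trans ((((1/(2*Real.pi):ℝ):ℂ) * ((lam s:ℝ):ℂ)) *
        ((∫ θ in (0:ℝ)..Real.pi, ((Real.cos (θ/2) * Real.sin (θ/2) * (Real.cos θ * Real.sin θ) : ℝ):ℂ)) *
         (∫ φ in (0:ℝ)..(2*Real.pi), (((Real.cos φ:ℝ):ℂ) + ((Real.sin φ:ℝ):ℂ) * Complex.I))))
    · rw [← key, ← MeasureTheory.integral_const_mul]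
      exact integral_congr_ae (Filter.EventuallyEq.of_eq (funext fun p => by push_cast; ring))
    · rw [pEone]; simp
  -- z 11
  · trans ((((1/(2*Real.pi):ℝ):ℂ) * ((lam s:ℝ):ℂ)) *
        ((∫ θ in (0:ℝ)..Real.pi, ((Real.sin (θ/2) * Real.sin (θ/2) * (Real.cos θ * Real.sin θ) : ℝ):ℂ)) *
         (∫ _ in (0:ℝ)..(2*Real.pi), (1:ℂ)))
      - (((1/(2*Real.pi):ℝ):ℂ) * (((lam s - 1)/2:ℝ):ℂ)) *
        ((∫ θ in (0:ℝ)..Real.pi, ((Real.cos θ * Real.sin θ : ℝ):ℂ)) *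
         (∫ _ in (0:ℝ)..(2*Real.pi), (1:ℂ))))
    · rw [← key, ← key, ← MeasureTheory.integral_const_mul, ← MeasureTheory.integral_const_mul,
        ← integral_sub (integrable_chart (by fun_prop)) (integrable_chart (by fun_prop))]
      exact integral_congr_ae (Filter.EventuallyEq.of_eq (funext fun p => by push_cast; ring))
    · rw [tC, tD, pone]; push_cast; field_simp; try ring

lemma pi_integral {E : Type*} [MeasurableSpace E] {μ : Measure E} [SigmaFinite μ]
    {n : ℕ} (f : Fin n → E → ℂ) :
    ∫ x : Fin n → E, ∏ i, f i (x i) ∂(Measure.pi fun _ => μ) = ∏ i, ∫ x, f i x ∂μ := by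
  induction n with
  | zero =>
      simp only [Finset.univ_eq_empty, Finset.prod_empty]
      rw [integral_const, measureReal_def, Measure.pi_empty_univ]
      simp
  | succ n n_ih =>
      calc
        _ = ∫ x : E × (Fin n → E),
            f 0 x.1 * ∏ i : Fin n, f (Fin.succ i) (x.2 i) ∂(μ.prod (Measure.pi fun _ => μ)) := by
          rw [← ((measurePreserving_piFinSuccAbove
            (fun _ : Fin (n+1) => μ) 0).symm).integral_comp']
          congr 1
          funext x
          rw [Fin.prod_univ_succ]
          simp [MeasurableEquiv.piFinSuccAbove_symm_apply, Fin.insertNthEquiv,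
            Fin.insertNth_zero, Fin.zero_succAbove, Fin.cons_zero, Fin.cons_succ]
        _ = (∫ x, f 0 x ∂μ) * ∏ i : Fin n, ∫ x, f (Fin.succ i) x ∂μ := by
          rw [← n_ih _, ← integral_prod_mul]
        _ = ∏ i, ∫ x, f i x ∂μ := by rw [Fin.prod_univ_succ]

lemma pi_integrable {E : Type*} [MeasurableSpace E] {μ : Measure E} [SigmaFinite μ]
    {n : ℕ} (f : Fin n → E → ℂ) (hf : ∀ i, Integrable (f i) μ) :
    Integrable (fun x : Fin n → E => ∏ i, f i (x i)) (Measure.pi fun _ => μ) := by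
  induction n with
  | zero =>
      simp only [Finset.univ_eq_empty, Finset.prod_empty]
      rw [integrable_const_iff]
      right
      refine ⟨?_⟩
      rw [Measure.pi_empty_univ]
      exact ENNReal.one_lt_top
  | succ n n_ih =>
      have hmp := ((measurePreserving_piFinSuccAbove (fun _ : Fin (n+1) => μ) 0).symm)
      rw [← hmp.integrable_comp_emb (MeasurableEquiv.measurableEmbedding _)]
      have hstep : Integrable (fun x : E × (Fin n → E) =>
          f 0 x.1 * ∏ i : Fin n, f (Fin.succ i) (x.2 i)) (μ.prod (Measure.pi fun _ => μ)) :=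
        Integrable.mul_prod (hf 0) (n_ih _ (fun i => hf _))
      refine hstep.congr ?_
      refine Filter.EventuallyEq.of_eq (funext fun x => ?_)
      show f 0 x.1 * ∏ i : Fin n, f (Fin.succ i) (x.2 i)
        = (fun y : Fin (n+1) → E => ∏ i, f i (y i)) ((MeasurableEquiv.piFinSuccAbove (fun _ => E) 0).symm x)
      simp only [Fin.prod_univ_succ]
      simp [MeasurableEquiv.piFinSuccAbove_symm_apply, Fin.insertNthEquiv,
        Fin.insertNth_zero, Fin.zero_succAbove, Fin.cons_zero, Fin.cons_succ]

instance : SigmaFinite chartMeasure := by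
  unfold chartMeasure; infer_instance

lemma cont_integrand (s : ℝ) (m : Fin 3) (k l : Fin 2) :
    Continuous (fun p : ℝ × ℝ => swKernel s p.1 p.2 k l
      * ((blochComp m p.1 p.2 * Real.sin p.1 : ℝ) : ℂ)) := by
  fin_cases m <;> fin_cases k <;> fin_cases l <;>
    simp only [show (⟨0, by norm_num⟩ : Fin 3) = 0 from rfl,
      show (⟨1, by norm_num⟩ : Fin 3) = 1 from rfl,
      show (⟨2, by norm_num⟩ : Fin 3) = 2 from rfl,
      show (⟨0, by norm_num⟩ : Fin 2) = 0 from rfl,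
      show (⟨1, by norm_num⟩ : Fin 2) = 1 from rfl,
      swKernel, Matrix.smul_apply, Matrix.sub_apply, Matrix.of_apply, Matrix.one_apply,
      smul_eq_mul, blochComp, pauli3, σx, σy, σz, Matrix.cons_val_zero, Matrix.cons_val_one,
      Matrix.head_cons, Matrix.cons_val', Matrix.head_fin_const, Matrix.cons_val_fin_one,
      Matrix.cons_val_two, Matrix.tail_cons,
      Fin.isValue, (by decide : ¬ (0:Fin 2) = 1), (by decide : ¬ (1:Fin 2) = 0),
      eq_self_iff_true, if_true, if_false, mul_zero, mul_one, sub_zero,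
      e00, e01, e10, e11] <;>
    fun_prop


/-- full-weight Pauli moments are recovered from the s-parametrized
phase-space function: ∫ f^{(s)}_ρ(Ω) ∏ᵢ n_{μ(i)}(θᵢ,φᵢ) dΩ = (λ(s)/3)^N · Tr[ρ ⊗ᵢ σ_{μ(i)}],
where dΩ = ∏ᵢ sinθᵢ dθᵢ dφᵢ. -/
theorem many_qubit_mgf_full_weight_moment (s : ℝ) (hs : s ∈ Set.Icc (-1 : ℝ) 1)
    (N : ℕ) (hN : 1 ≤ N) (μ : Fin N → Fin 3)
    (ρ : Matrix (Fin N → Fin 2) (Fin N → Fin 2) ℂ) :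
    (∫ Ω : Fin N → ℝ × ℝ,
        fS N s ρ Ω * ∏ i, ((blochComp (μ i) (Ω i).1 (Ω i).2 * Real.sin (Ω i).1 : ℝ) : ℂ)
      ∂(Measure.pi fun _ : Fin N => chartMeasure))
    = (((lam s / 3 : ℝ) : ℂ)) ^ N *
        Matrix.trace (ρ * Matrix.of (fun b b' => ∏ i, pauli3 (μ i) (b i) (b' i))) := by
  have hint : ∀ b b' : Fin N → Fin 2, Integrable (fun Ω : Fin N → ℝ × ℝ =>
      ∏ i, (swKernel s (Ω i).1 (Ω i).2 (b' i) (b i)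
        * ((blochComp (μ i) (Ω i).1 (Ω i).2 * Real.sin (Ω i).1 : ℝ) : ℂ)))
      (Measure.pi fun _ => chartMeasure) :=
    fun b b' => pi_integrable _ (fun i => integrable_chart (cont_integrand s (μ i) (b' i) (b i)))
  have h1 : ∀ Ω : Fin N → ℝ × ℝ,
      fS N s ρ Ω * ∏ i, ((blochComp (μ i) (Ω i).1 (Ω i).2 * Real.sin (Ω i).1 : ℝ) : ℂ)
      = ∑ b : Fin N → Fin 2, ∑ b' : Fin N → Fin 2, ρ b b' *
          ∏ i, (swKernel s (Ω i).1 (Ω i).2 (b' i) (b i)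
            * ((blochComp (μ i) (Ω i).1 (Ω i).2 * Real.sin (Ω i).1 : ℝ) : ℂ)) := by
    intro Ω
    rw [fS, Matrix.trace]
    simp only [Matrix.diag_apply, Matrix.mul_apply, Matrix.of_apply]
    rw [Finset.sum_mul]
    refine Finset.sum_congr rfl fun b _ => ?_
    rw [Finset.sum_mul]
    refine Finset.sum_congr rfl fun b' _ => ?_
    rw [mul_assoc, ← Finset.prod_mul_distrib]
  simp only [h1]
  trans (∑ b : Fin N → Fin 2, ∑ b' : Fin N → Fin 2, ρ b b' *
      ∏ i, (((lam s / 3 : ℝ) : ℂ) * pauli3 (μ i) (b' i) (b i)))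
  · rw [integral_finset_sum _
      (fun b _ => integrable_finset_sum _ (fun b' _ => (hint b b').const_mul (ρ b b')))]
    refine Finset.sum_congr rfl fun b _ => ?_
    rw [integral_finset_sum _ (fun b' _ => (hint b b').const_mul (ρ b b'))]
    refine Finset.sum_congr rfl fun b' _ => ?_
    rw [MeasureTheory.integral_const_mul,
      pi_integral (fun i (p : ℝ × ℝ) => swKernel s p.1 p.2 (b' i) (b i)
        * ((blochComp (μ i) p.1 p.2 * Real.sin p.1 : ℝ) : ℂ))]
    congr 1
    exact Finset.prod_congr rfl fun i _ => qubit_int s (μ i) (b' i) (b i)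
  · simp only [Finset.prod_mul_distrib, Finset.prod_const, Finset.card_univ, Fintype.card_fin]
    rw [Matrix.trace]
    simp only [Matrix.diag_apply, Matrix.mul_apply, Matrix.of_apply]
    rw [Finset.mul_sum]
    refine Finset.sum_congr rfl fun b _ => ?_
    rw [Finset.mul_sum]
    refine Finset.sum_congr rfl fun b' _ => ?_
    ring
end
end

section
/- Fix s ∈ [−1,1]. The Stratonovich–Weyl map is inverted by the dual kernel: for every 2×2 complex matrix A, the matrix-valued integral 2π · ∫₀^{2π}∫₀^π Tr[A Δ^{(s)}(θ,φ)] · Δ^{(−s)}(θ,φ) sinθ dθ dφ equals A. -/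
open Matrix Complex Real MeasureTheory

noncomputable section

/-! ### Auxiliary machinery -/

/-- basis θ-integrand -/
def bas (p q : ℕ) (θ : ℝ) : ℝ := Real.cos (θ/2)^p * Real.sin (θ/2)^q * Real.sin θ

@[fun_prop] lemma bas_cont (p q : ℕ) : Continuous (bas p q) := by unfold bas; fun_prop

lemma cos_half_sq (x : ℝ) : Real.cos (x/2)^2 = 1/2 + Real.cos x/2 := by
  have := Real.cos_sq (x/2); rwa [show 2*(x/2) = x by ring] at this

lemma sin_half_sq (x : ℝ) : Real.sin (x/2)^2 = 1/2 - Real.cos x/2 := by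
  have h := Real.sin_sq (x/2); rw [cos_half_sq] at h; linarith

lemma bas_int_eval (p q : ℕ) (a b c : ℝ)
    (hder : ∀ x : ℝ, (a + 2*b*Real.cos x + 3*c*Real.cos x^2) * (-Real.sin x) = bas p q x) :
    ∫ θ in (0:ℝ)..π, bas p q θ = -2*a - 2*c := by
  have hF : ∀ x ∈ Set.uIcc (0:ℝ) π, HasDerivAt
      (fun y => a*Real.cos y + b*Real.cos y^2 + c*Real.cos y^3) (bas p q x) x := by
    intro x _
    have hc := Real.hasDerivAt_cos x
    have h := ((hc.const_mul a).add ((hc.pow 2).const_mul b)).add ((hc.pow 3).const_mul c)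
    exact h.congr_deriv (by rw [← hder x]; push_cast; ring)
  rw [intervalIntegral.integral_eq_sub_of_hasDerivAt hF ((bas_cont p q).intervalIntegrable _ _)]
  simp [Real.cos_pi, Real.cos_zero]; ring

lemma B00 : ∫ θ in (0:ℝ)..π, bas 0 0 θ = 2 := by
  have := bas_int_eval 0 0 (-1) 0 0 (fun x => by unfold bas; ring)
  norm_num at this; exact this

lemma B20 : ∫ θ in (0:ℝ)..π, bas 2 0 θ = 1 := by
  have := bas_int_eval 2 0 (-1/2) (-1/4) 0 (fun x => by
    unfold bas; linear_combination (-Real.sin x) * cos_half_sq x)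
  norm_num at this; exact this

lemma B02 : ∫ θ in (0:ℝ)..π, bas 0 2 θ = 1 := by
  have := bas_int_eval 0 2 (-1/2) (1/4) 0 (fun x => by
    unfold bas; linear_combination (-Real.sin x) * sin_half_sq x)
  norm_num at this; exact this

lemma B40 : ∫ θ in (0:ℝ)..π, bas 4 0 θ = 2/3 := by
  have := bas_int_eval 4 0 (-1/4) (-1/4) (-1/12) (fun x => by
    unfold bas
    linear_combination (-(Real.sin x) * (Real.cos (x/2)^2 + 1/2 + Real.cos x/2)) * cos_half_sq x)
  linarith [this]

lemma B04 : ∫ θ in (0:ℝ)..π, bas 0 4 θ = 2/3 := by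
  have := bas_int_eval 0 4 (-1/4) (1/4) (-1/12) (fun x => by
    unfold bas
    linear_combination (-(Real.sin x) * (Real.sin (x/2)^2 + 1/2 - Real.cos x/2)) * sin_half_sq x)
  linarith [this]

lemma B22 : ∫ θ in (0:ℝ)..π, bas 2 2 θ = 1/3 := by
  have := bas_int_eval 2 2 (-1/4) 0 (1/12) (fun x => by
    unfold bas
    linear_combination (-(Real.sin x) * Real.sin (x/2)^2) * cos_half_sq x
      + (-(Real.sin x) * (1/2 + Real.cos x/2)) * sin_half_sq x)
  linarith [this]

/-! φ-phase functions and their integrals -/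

def phOne : ℝ → ℂ := fun _ => 1
def phE : ℝ → ℂ := fun φ => Complex.exp (Complex.I * φ)
def phEinv : ℝ → ℂ := fun φ => (Complex.exp (Complex.I * φ))⁻¹
def phE2 : ℝ → ℂ := fun φ => Complex.exp (Complex.I * φ)^2
def phEinv2 : ℝ → ℂ := fun φ => ((Complex.exp (Complex.I * φ))⁻¹)^2
def phU : ℝ → ℂ := fun φ => Complex.exp (Complex.I * φ) * (Complex.exp (Complex.I * φ))⁻¹
def phU2 : ℝ → ℂ :=
  fun φ => (Complex.exp (Complex.I * φ) * (Complex.exp (Complex.I * φ))⁻¹)^2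
def phUE : ℝ → ℂ :=
  fun φ => Complex.exp (Complex.I * φ) * (Complex.exp (Complex.I * φ))⁻¹ * Complex.exp (Complex.I * φ)
def phUEinv : ℝ → ℂ :=
  fun φ => Complex.exp (Complex.I * φ) * (Complex.exp (Complex.I * φ))⁻¹ * (Complex.exp (Complex.I * φ))⁻¹

lemma contE : Continuous (fun φ : ℝ => Complex.exp (Complex.I * φ)) := by fun_prop

lemma contEinv : Continuous (fun φ : ℝ => (Complex.exp (Complex.I * φ))⁻¹) :=
  contE.inv₀ (fun φ => Complex.exp_ne_zero _)

lemma cont_phOne : Continuous phOne := continuous_const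
lemma cont_phE : Continuous phE := contE
lemma cont_phEinv : Continuous phEinv := contEinv
lemma cont_phE2 : Continuous phE2 := contE.pow 2
lemma cont_phEinv2 : Continuous phEinv2 := contEinv.pow 2
lemma cont_phU : Continuous phU := contE.mul contEinv
lemma cont_phU2 : Continuous phU2 := (contE.mul contEinv).pow 2
lemma cont_phUE : Continuous phUE := (contE.mul contEinv).mul contE
lemma cont_phUEinv : Continuous phUEinv := (contE.mul contEinv).mul contEinv

lemma phase_int (n : ℤ) (hn : (n:ℂ) ≠ 0) :
    ∫ φ in (0:ℝ)..(2*π), Complex.exp ((n * Complex.I) * φ) = 0 := by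
  rw [integral_exp_mul_complex (by simpa using hn)]
  have h1 : Complex.exp ((n * Complex.I) * ((2*π:ℝ):ℂ)) = 1 := by
    rw [show ((n:ℂ) * Complex.I) * ((2*π:ℝ):ℂ) = n * (2*π*Complex.I) by push_cast; ring]
    exact Complex.exp_int_mul_two_pi_mul_I n
  simp only [h1, Complex.ofReal_zero, mul_zero, Complex.exp_zero, sub_self, zero_div]

lemma P_one : ∫ φ in (0:ℝ)..(2*π), phOne φ = ((2*π:ℝ):ℂ) := by simp [phOne]

lemma P_E : ∫ φ in (0:ℝ)..(2*π), phE φ = 0 := by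
  have := phase_int 1 (by norm_num)
  rw [← this]; unfold phE
  congr 1; funext x; congr 1; push_cast; ring

lemma P_Einv : ∫ φ in (0:ℝ)..(2*π), phEinv φ = 0 := by
  have := phase_int (-1) (by norm_num)
  rw [← this]; unfold phEinv
  congr 1; funext x
  rw [← Complex.exp_neg]; congr 1; push_cast; ring

lemma P_E2 : ∫ φ in (0:ℝ)..(2*π), phE2 φ = 0 := by
  have := phase_int 2 (by norm_num)
  rw [← this]; unfold phE2
  congr 1; funext x
  rw [← Complex.exp_nat_mul]; congr 1; push_cast; ring

lemma P_Einv2 : ∫ φ in (0:ℝ)..(2*π), phEinv2 φ = 0 := by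
  have := phase_int (-2) (by norm_num)
  rw [← this]; unfold phEinv2
  congr 1; funext x
  rw [← Complex.exp_neg, ← Complex.exp_nat_mul]; congr 1; push_cast; ring

lemma phU_eq : phU = phOne := by
  funext φ; exact mul_inv_cancel₀ (Complex.exp_ne_zero _)

lemma P_U : ∫ φ in (0:ℝ)..(2*π), phU φ = ((2*π:ℝ):ℂ) := by rw [phU_eq]; exact P_one

lemma P_U2 : ∫ φ in (0:ℝ)..(2*π), phU2 φ = ((2*π:ℝ):ℂ) := by
  have : phU2 = phOne := by
    funext φ; unfold phU2 phOne; rw [mul_inv_cancel₀ (Complex.exp_ne_zero _)]; norm_num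
  rw [this]; exact P_one

lemma P_UE : ∫ φ in (0:ℝ)..(2*π), phUE φ = 0 := by
  have : phUE = phE := by
    funext φ; unfold phUE phE; rw [mul_inv_cancel₀ (Complex.exp_ne_zero _), one_mul]
  rw [this]; exact P_E

lemma P_UEinv : ∫ φ in (0:ℝ)..(2*π), phUEinv φ = 0 := by
  have : phUEinv = phEinv := by
    funext φ; unfold phUEinv phEinv; rw [mul_inv_cancel₀ (Complex.exp_ne_zero _), one_mul]
  rw [this]; exact P_Einv

/-! master double-integral computation -/

lemma masterCombo {nn : ℕ} (f : ℝ → ℝ → ℂ) (w : Fin nn → ℂ) (ph : Fin nn → ℝ → ℂ)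
    (p q : Fin nn → ℕ) (vals : Fin nn → ℝ) (pint : Fin nn → ℂ)
    (hf : ∀ θ φ : ℝ, f θ φ = ∑ i, w i * ph i φ * ((bas (p i) (q i) θ : ℝ) : ℂ))
    (hvals : ∀ i, (∫ θ in (0:ℝ)..π, bas (p i) (q i) θ) = vals i)
    (hc : ∀ i, Continuous (ph i))
    (hp : ∀ i, (∫ φ in (0:ℝ)..(2*π), ph i φ) = pint i) :
    (∫ φ in (0:ℝ)..(2*π), ∫ θ in (0:ℝ)..π, f θ φ) = ∑ i, w i * pint i * ((vals i : ℝ) : ℂ) := by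
  have h1 : ∀ φ : ℝ, (∫ θ in (0:ℝ)..π, f θ φ)
      = ∑ i, (w i * ((vals i : ℝ) : ℂ)) * ph i φ := by
    intro φ
    rw [show (fun θ => f θ φ)
        = fun θ => ∑ i, (w i * ph i φ) * ((bas (p i) (q i) θ : ℝ) : ℂ)
      from funext fun θ => hf θ φ]
    rw [intervalIntegral.integral_finset_sum (fun i _ =>
      (Continuous.intervalIntegrable (by fun_prop) _ _))]
    refine Finset.sum_congr rfl fun i _ => ?_
    rw [intervalIntegral.integral_const_mul, intervalIntegral.integral_ofReal, hvals i]
    ring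
  simp only [h1]
  rw [intervalIntegral.integral_finset_sum (fun i _ =>
    (Continuous.intervalIntegrable (by have := hc i; fun_prop) _ _))]
  refine Finset.sum_congr rfl fun i _ => ?_
  rw [intervalIntegral.integral_const_mul, hp i]
  ring

lemma hconjE (φ : ℝ) : (starRingEnd ℂ) (Complex.exp (Complex.I * φ)) =
    (Complex.exp (Complex.I * φ))⁻¹ := by
  rw [← Complex.exp_conj, ← Complex.exp_neg]; congr 1; simp [Complex.conj_I]

set_option maxHeartbeats 3200000 in
/-- the Stratonovich–Weyl map is inverted by the dual kernel:
2π ∫ Tr[A Δ^{(s)}(θ,φ)] Δ^{(−s)}(θ,φ) sinθ dθ dφ = A (entrywise). -/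
theorem sw_kernel_duality_inversion (s : ℝ) (hs : s ∈ Set.Icc (-1 : ℝ) 1)
    (A : Matrix (Fin 2) (Fin 2) ℂ) (k l : Fin 2) :
    (2 * Real.pi : ℂ) *
      ∫ φ in (0:ℝ)..(2 * Real.pi), ∫ θ in (0:ℝ)..Real.pi,
        Matrix.trace (A * swKernel s θ φ) * swKernel (-s) θ φ k l
          * ((Real.sin θ : ℝ) : ℂ)
    = A k l := by
  have hπ : ((Real.pi:ℝ):ℂ) ≠ 0 := Complex.ofReal_ne_zero.mpr Real.pi_ne_zero
  have hkey : (2*(Real.pi:ℂ))*(1/(2*(Real.pi:ℂ))) = 1 := by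
    field_simp
  have hmn : ((lam s : ℝ):ℂ) * ((lam (-s) : ℝ):ℂ) = 3 := by
    rw [← Complex.ofReal_mul]
    norm_cast
    unfold lam
    rw [← Real.rpow_add (by norm_num)]
    rw [show (1+s)/2 + (1+-s)/2 = 1 by ring, Real.rpow_one]
  have h00 : (1 : Matrix (Fin 2) (Fin 2) ℂ) 0 0 = 1 := by simp
  have h11' : (1 : Matrix (Fin 2) (Fin 2) ℂ) 1 1 = 1 := by simp
  have h01 : (1 : Matrix (Fin 2) (Fin 2) ℂ) 0 1 = 0 := by simp
  have h10 : (1 : Matrix (Fin 2) (Fin 2) ℂ) 1 0 = 0 := by simp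
  have hs10 : (1 : Matrix (Fin 2) (Fin 2) ℂ) (Fin.succ 0) 0 = 0 := by
    rw [show (Fin.succ 0 : Fin 2) = 1 by rfl]; simp
  have hs01 : (1 : Matrix (Fin 2) (Fin 2) ℂ) 0 (Fin.succ 0) = 0 := by
    rw [show (Fin.succ 0 : Fin 2) = 1 by rfl]; simp
  have hs11 : (1 : Matrix (Fin 2) (Fin 2) ℂ) (Fin.succ 0) (Fin.succ 0) = 1 := by
    rw [show (Fin.succ 0 : Fin 2) = 1 by rfl]; simp
  set m : ℂ := ((lam s : ℝ):ℂ) with hm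
  set n : ℂ := ((lam (-s) : ℝ):ℂ) with hn
  have hPc : True := trivial
  fin_cases k <;> fin_cases l
  · -- (0,0)
    show (2 * Real.pi : ℂ) *
      (∫ φ in (0:ℝ)..(2 * Real.pi), ∫ θ in (0:ℝ)..Real.pi,
        Matrix.trace (A * swKernel s θ φ) * swKernel (-s) θ φ 0 0
          * ((Real.sin θ : ℝ) : ℂ)) = A 0 0
    rw [show (∫ φ in (0:ℝ)..(2 * Real.pi), ∫ θ in (0:ℝ)..Real.pi,
        Matrix.trace (A * swKernel s θ φ) * swKernel (-s) θ φ 0 0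
          * ((Real.sin θ : ℝ) : ℂ)) = _ from
      masterCombo _
        ![(1/(2*(Real.pi:ℂ)))^2*m*n*(A 0 0), (1/(2*(Real.pi:ℂ)))^2*m*n*(A 0 1), (1/(2*(Real.pi:ℂ)))^2*m*n*(A 1 0), (1/(2*(Real.pi:ℂ)))^2*m*n*(A 1 1),
          -(1/(2*(Real.pi:ℂ)))^2*m*(n-1)/2*(A 0 0), -(1/(2*(Real.pi:ℂ)))^2*m*(n-1)/2*(A 0 1), -(1/(2*(Real.pi:ℂ)))^2*m*(n-1)/2*(A 1 0), -(1/(2*(Real.pi:ℂ)))^2*m*(n-1)/2*(A 1 1),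
          -(1/(2*(Real.pi:ℂ)))^2*n*(m-1)/2*(A 0 0 + A 1 1), (1/(2*(Real.pi:ℂ)))^2*(m-1)*(n-1)/4*(A 0 0 + A 1 1)]
        ![phOne, phE, phEinv, phU, phOne, phE, phEinv, phU, phOne, phOne]
        ![4,3,3,2,2,1,1,0,2,0] ![0,1,1,2,0,1,1,2,0,0]
        ![2/3, (∫ θ in (0:ℝ)..π, bas 3 1 θ), (∫ θ in (0:ℝ)..π, bas 3 1 θ), 1/3, 1,
          (∫ θ in (0:ℝ)..π, bas 1 1 θ), (∫ θ in (0:ℝ)..π, bas 1 1 θ), 1, 1, 2]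
        ![((2*π:ℝ):ℂ), 0, 0, ((2*π:ℝ):ℂ), ((2*π:ℝ):ℂ), 0, 0, ((2*π:ℝ):ℂ), ((2*π:ℝ):ℂ), ((2*π:ℝ):ℂ)]
        (by
          intro θ φ
          simp only [swKernel, cohVec, Matrix.trace, Matrix.diag, Matrix.mul_apply,
            Fin.sum_univ_two, Matrix.smul_apply, Matrix.sub_apply, Matrix.of_apply,
            h00, h11', h01, h10, hs10, hs01, hs11,
            Matrix.cons_val_zero, Matrix.cons_val_one, Matrix.head_cons,
            Fin.succ_zero_eq_one, smul_eq_mul, _root_.map_mul, Complex.conj_ofReal, hconjE, bas,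
            Fin.sum_univ_succ, Fin.sum_univ_zero, Matrix.cons_val_succ,
            phOne, phE, phEinv, phE2, phEinv2, phU, phU2, phUE, phUEinv,
            Fin.isValue]
          simp only [Complex.ofReal_mul, Complex.ofReal_pow, Complex.ofReal_div,
            Complex.ofReal_sub, Complex.ofReal_one, Complex.ofReal_ofNat]
          ring)
        (by intro i; fin_cases i <;>
          first | exact B40 | exact B04 | exact B22 | exact B20 | exact B02 | exact B00 | rfl)
        (by intro i; fin_cases i <;>
          first | exact cont_phOne | exact cont_phE | exact cont_phEinv | exact cont_phE2 | exact cont_phEinv2 | exact cont_phU | exact cont_phU2 | exact cont_phUE | exact cont_phUEinv)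
        (by intro i; fin_cases i <;>
          first | exact P_one | exact P_E | exact P_Einv | exact P_E2 | exact P_Einv2 | exact P_U | exact P_U2 | exact P_UE | exact P_UEinv)]
    simp only [Fin.sum_univ_succ, Fin.sum_univ_zero, Matrix.cons_val_zero, Matrix.cons_val_succ]
    push_cast
    linear_combination (((2/3)*m*n*(A 0 0) + (1/3)*m*n*(A 1 1) - m*(n-1)/2*(A 0 0 + A 1 1) - n*(m-1)/2*(A 0 0 + A 1 1) + (m-1)*(n-1)/2*(A 0 0 + A 1 1))*((2*(Real.pi:ℂ))*(1/(2*(Real.pi:ℂ))) + 1))*hkey + ((A 0 0 - A 1 1)/6)*hmn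
  · -- (0,1)
    show (2 * Real.pi : ℂ) *
      (∫ φ in (0:ℝ)..(2 * Real.pi), ∫ θ in (0:ℝ)..Real.pi,
        Matrix.trace (A * swKernel s θ φ) * swKernel (-s) θ φ 0 1
          * ((Real.sin θ : ℝ) : ℂ)) = A 0 1
    rw [show (∫ φ in (0:ℝ)..(2 * Real.pi), ∫ θ in (0:ℝ)..Real.pi,
        Matrix.trace (A * swKernel s θ φ) * swKernel (-s) θ φ 0 1
          * ((Real.sin θ : ℝ) : ℂ)) = _ from
      masterCombo _
        ![(1/(2*(Real.pi:ℂ)))^2*m*n*(A 0 1), (1/(2*(Real.pi:ℂ)))^2*m*n*(A 0 0), (1/(2*(Real.pi:ℂ)))^2*m*n*(A 1 1),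
          (1/(2*(Real.pi:ℂ)))^2*m*n*(A 1 0), -(1/(2*(Real.pi:ℂ)))^2*n*(m-1)/2*(A 0 0 + A 1 1)]
        ![phU, phEinv, phUEinv, phEinv2, phEinv]
        ![2,3,1,2,1] ![2,1,3,2,1]
        ![1/3, (∫ θ in (0:ℝ)..π, bas 3 1 θ), (∫ θ in (0:ℝ)..π, bas 1 3 θ), 1/3,
          (∫ θ in (0:ℝ)..π, bas 1 1 θ)]
        ![((2*π:ℝ):ℂ), 0, 0, 0, 0]
        (by
          intro θ φ
          simp only [swKernel, cohVec, Matrix.trace, Matrix.diag, Matrix.mul_apply,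
            Fin.sum_univ_two, Matrix.smul_apply, Matrix.sub_apply, Matrix.of_apply,
            h00, h11', h01, h10, hs10, hs01, hs11,
            Matrix.cons_val_zero, Matrix.cons_val_one, Matrix.head_cons,
            Fin.succ_zero_eq_one, smul_eq_mul, _root_.map_mul, Complex.conj_ofReal, hconjE, bas,
            Fin.sum_univ_succ, Fin.sum_univ_zero, Matrix.cons_val_succ,
            phU, phEinv, phUEinv, phEinv2,
            Fin.isValue]
          simp only [Complex.ofReal_mul, Complex.ofReal_pow, Complex.ofReal_div,
            Complex.ofReal_sub, Complex.ofReal_one, Complex.ofReal_ofNat]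
          ring)
        (by intro i; fin_cases i <;>
          first | exact B22 | rfl)
        (by intro i; fin_cases i <;>
          first | exact cont_phU | exact cont_phEinv | exact cont_phUEinv | exact cont_phEinv2)
        (by intro i; fin_cases i <;>
          first | exact P_U | exact P_Einv | exact P_UEinv | exact P_Einv2)]
    simp only [Fin.sum_univ_succ, Fin.sum_univ_zero, Matrix.cons_val_zero, Matrix.cons_val_succ]
    push_cast
    field_simp [hπ]
    linear_combination (4*((Real.pi:ℝ):ℂ)*(A 0 1))*hmn
  · -- (1,0)
    show (2 * Real.pi : ℂ) *
      (∫ φ in (0:ℝ)..(2 * Real.pi), ∫ θ in (0:ℝ)..Real.pi,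
        Matrix.trace (A * swKernel s θ φ) * swKernel (-s) θ φ 1 0
          * ((Real.sin θ : ℝ) : ℂ)) = A 1 0
    rw [show (∫ φ in (0:ℝ)..(2 * Real.pi), ∫ θ in (0:ℝ)..Real.pi,
        Matrix.trace (A * swKernel s θ φ) * swKernel (-s) θ φ 1 0
          * ((Real.sin θ : ℝ) : ℂ)) = _ from
      masterCombo _
        ![(1/(2*(Real.pi:ℂ)))^2*m*n*(A 1 0), (1/(2*(Real.pi:ℂ)))^2*m*n*(A 0 0), (1/(2*(Real.pi:ℂ)))^2*m*n*(A 1 1),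
          (1/(2*(Real.pi:ℂ)))^2*m*n*(A 0 1), -(1/(2*(Real.pi:ℂ)))^2*n*(m-1)/2*(A 0 0 + A 1 1)]
        ![phU, phE, phUE, phE2, phE]
        ![2,3,1,2,1] ![2,1,3,2,1]
        ![1/3, (∫ θ in (0:ℝ)..π, bas 3 1 θ), (∫ θ in (0:ℝ)..π, bas 1 3 θ), 1/3,
          (∫ θ in (0:ℝ)..π, bas 1 1 θ)]
        ![((2*π:ℝ):ℂ), 0, 0, 0, 0]
        (by
          intro θ φ
          simp only [swKernel, cohVec, Matrix.trace, Matrix.diag, Matrix.mul_apply,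
            Fin.sum_univ_two, Matrix.smul_apply, Matrix.sub_apply, Matrix.of_apply,
            h00, h11', h01, h10, hs10, hs01, hs11,
            Matrix.cons_val_zero, Matrix.cons_val_one, Matrix.head_cons,
            Fin.succ_zero_eq_one, smul_eq_mul, _root_.map_mul, Complex.conj_ofReal, hconjE, bas,
            Fin.sum_univ_succ, Fin.sum_univ_zero, Matrix.cons_val_succ,
            phOne, phE, phEinv, phE2, phEinv2, phU, phU2, phUE, phUEinv,
            Fin.isValue]
          simp only [Complex.ofReal_mul, Complex.ofReal_pow, Complex.ofReal_div,
            Complex.ofReal_sub, Complex.ofReal_one, Complex.ofReal_ofNat]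
          ring)
        (by intro i; fin_cases i <;>
          first | exact B22 | rfl)
        (by intro i; fin_cases i <;>
          first | exact cont_phOne | exact cont_phE | exact cont_phEinv | exact cont_phE2 | exact cont_phEinv2 | exact cont_phU | exact cont_phU2 | exact cont_phUE | exact cont_phUEinv)
        (by intro i; fin_cases i <;>
          first | exact P_one | exact P_E | exact P_Einv | exact P_E2 | exact P_Einv2 | exact P_U | exact P_U2 | exact P_UE | exact P_UEinv)]
    simp only [Fin.sum_univ_succ, Fin.sum_univ_zero, Matrix.cons_val_zero, Matrix.cons_val_succ]
    push_cast
    field_simp [hπ]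
    linear_combination (4*((Real.pi:ℝ):ℂ)*(A 1 0))*hmn
  · -- (1,1)
    show (2 * Real.pi : ℂ) *
      (∫ φ in (0:ℝ)..(2 * Real.pi), ∫ θ in (0:ℝ)..Real.pi,
        Matrix.trace (A * swKernel s θ φ) * swKernel (-s) θ φ 1 1
          * ((Real.sin θ : ℝ) : ℂ)) = A 1 1
    rw [show (∫ φ in (0:ℝ)..(2 * Real.pi), ∫ θ in (0:ℝ)..Real.pi,
        Matrix.trace (A * swKernel s θ φ) * swKernel (-s) θ φ 1 1
          * ((Real.sin θ : ℝ) : ℂ)) = _ from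
      masterCombo _
        ![(1/(2*(Real.pi:ℂ)))^2*m*n*(A 0 0), (1/(2*(Real.pi:ℂ)))^2*m*n*(A 0 1), (1/(2*(Real.pi:ℂ)))^2*m*n*(A 1 0), (1/(2*(Real.pi:ℂ)))^2*m*n*(A 1 1),
          -(1/(2*(Real.pi:ℂ)))^2*m*(n-1)/2*(A 0 0), -(1/(2*(Real.pi:ℂ)))^2*m*(n-1)/2*(A 0 1), -(1/(2*(Real.pi:ℂ)))^2*m*(n-1)/2*(A 1 0), -(1/(2*(Real.pi:ℂ)))^2*m*(n-1)/2*(A 1 1),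
          -(1/(2*(Real.pi:ℂ)))^2*n*(m-1)/2*(A 0 0 + A 1 1), (1/(2*(Real.pi:ℂ)))^2*(m-1)*(n-1)/4*(A 0 0 + A 1 1)]
        ![phU, phUE, phUEinv, phU2, phOne, phE, phEinv, phU, phU, phOne]
        ![2,1,1,0,2,1,1,0,0,0] ![2,3,3,4,0,1,1,2,2,0]
        ![1/3, (∫ θ in (0:ℝ)..π, bas 1 3 θ), (∫ θ in (0:ℝ)..π, bas 1 3 θ), 2/3, 1,
          (∫ θ in (0:ℝ)..π, bas 1 1 θ), (∫ θ in (0:ℝ)..π, bas 1 1 θ), 1, 1, 2]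
        ![((2*π:ℝ):ℂ), 0, 0, ((2*π:ℝ):ℂ), ((2*π:ℝ):ℂ), 0, 0, ((2*π:ℝ):ℂ), ((2*π:ℝ):ℂ), ((2*π:ℝ):ℂ)]
        (by
          intro θ φ
          simp only [swKernel, cohVec, Matrix.trace, Matrix.diag, Matrix.mul_apply,
            Fin.sum_univ_two, Matrix.smul_apply, Matrix.sub_apply, Matrix.of_apply,
            h00, h11', h01, h10, hs10, hs01, hs11,
            Matrix.cons_val_zero, Matrix.cons_val_one, Matrix.head_cons,
            Fin.succ_zero_eq_one, smul_eq_mul, _root_.map_mul, Complex.conj_ofReal, hconjE, bas,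
            Fin.sum_univ_succ, Fin.sum_univ_zero, Matrix.cons_val_succ,
            phOne, phE, phEinv, phE2, phEinv2, phU, phU2, phUE, phUEinv,
            Fin.isValue]
          simp only [Complex.ofReal_mul, Complex.ofReal_pow, Complex.ofReal_div,
            Complex.ofReal_sub, Complex.ofReal_one, Complex.ofReal_ofNat]
          ring)
        (by intro i; fin_cases i <;>
          first | exact B40 | exact B04 | exact B22 | exact B20 | exact B02 | exact B00 | rfl)
        (by intro i; fin_cases i <;>
          first | exact cont_phOne | exact cont_phE | exact cont_phEinv | exact cont_phE2 | exact cont_phEinv2 | exact cont_phU | exact cont_phU2 | exact cont_phUE | exact cont_phUEinv)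
        (by intro i; fin_cases i <;>
          first | exact P_one | exact P_E | exact P_Einv | exact P_E2 | exact P_Einv2 | exact P_U | exact P_U2 | exact P_UE | exact P_UEinv)]
    simp only [Fin.sum_univ_succ, Fin.sum_univ_zero, Matrix.cons_val_zero, Matrix.cons_val_succ]
    push_cast
    linear_combination (((1/3)*m*n*(A 0 0) + (2/3)*m*n*(A 1 1) - m*(n-1)/2*(A 0 0 + A 1 1) - n*(m-1)/2*(A 0 0 + A 1 1) + (m-1)*(n-1)/2*(A 0 0 + A 1 1))*((2*(Real.pi:ℂ))*(1/(2*(Real.pi:ℂ))) + 1))*hkey + ((A 1 1 - A 0 0)/6)*hmn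
end
end

section
/- Fix s ∈ [−1,1]. The Stratonovich–Weyl correspondence satisfies the traciality (dual pairing) property: for all 2×2 complex matrices A and B, Tr(AB) = 2π · ∫₀^{2π}∫₀^π Tr[A Δ^{(s)}(θ,φ)] · Tr[B Δ^{(−s)}(θ,φ)] sinθ dθ dφ. In particular, expectation values are computed by pairing the Q function (s = −1) of the state against the P function (s = +1) of the observable. -/
open Matrix Complex Real MeasureTheory

noncomputable section

lemma lam_mul (s : ℝ) : lam s * lam (-s) = 3 := by
  unfold lam
  rw [← Real.rpow_add (by norm_num : (0:ℝ) < 3)]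
  rw [show (1 + s)/2 + (1 + -s)/2 = 1 by ring, Real.rpow_one]

lemma inner_int (p q r p' q' r' : ℂ) :
    (∫ θ in (0:ℝ)..Real.pi,
        (p + q * (Real.cos θ : ℂ) + r * (Real.sin θ : ℂ)) *
        (p' + q' * (Real.cos θ : ℂ) + r' * (Real.sin θ : ℂ)) * (Real.sin θ : ℂ))
    = 2*(p*p') + (2/3)*(q*q') + (4/3)*(r*r') + ((Real.pi : ℂ)/2)*(p*r' + p'*r) := by
  have h : Set.EqOn (fun θ : ℝ =>
      (p + q * (Real.cos θ : ℂ) + r * (Real.sin θ : ℂ)) *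
      (p' + q' * (Real.cos θ : ℂ) + r' * (Real.sin θ : ℂ)) * (Real.sin θ : ℂ))
      (fun θ : ℝ =>
        p*p' * ((Real.sin θ : ℝ) : ℂ) +
        ((p*q'+p'*q) * ((Real.sin θ * Real.cos θ : ℝ) : ℂ) +
        ((p*r'+p'*r) * ((Real.sin θ^2 : ℝ) : ℂ) +
        (q*q' * ((Real.sin θ * Real.cos θ^2 : ℝ) : ℂ) +
        ((q*r'+q'*r) * ((Real.sin θ^2 * Real.cos θ : ℝ) : ℂ) +
        r*r' * ((Real.sin θ^3 : ℝ) : ℂ)))))) (Set.uIcc 0 Real.pi) := by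
    intro θ _
    push_cast
    ring
  rw [intervalIntegral.integral_congr h]
  rw [intervalIntegral.integral_add (by exact Continuous.intervalIntegrable (by fun_prop) _ _) (by exact Continuous.intervalIntegrable (by fun_prop) _ _),
      intervalIntegral.integral_add (by exact Continuous.intervalIntegrable (by fun_prop) _ _) (by exact Continuous.intervalIntegrable (by fun_prop) _ _),
      intervalIntegral.integral_add (by exact Continuous.intervalIntegrable (by fun_prop) _ _) (by exact Continuous.intervalIntegrable (by fun_prop) _ _),
      intervalIntegral.integral_add (by exact Continuous.intervalIntegrable (by fun_prop) _ _) (by exact Continuous.intervalIntegrable (by fun_prop) _ _),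
      intervalIntegral.integral_add (by exact Continuous.intervalIntegrable (by fun_prop) _ _) (by exact Continuous.intervalIntegrable (by fun_prop) _ _)]
  simp only [intervalIntegral.integral_const_mul, intervalIntegral.integral_ofReal,
    integral_sin, integral_sin_mul_cos₁, integral_sin_sq, integral_sin_mul_cos_sq,
    integral_sin_sq_mul_cos, integral_sin_pow_three,
    Real.sin_pi, Real.sin_zero, Real.cos_pi, Real.cos_zero]
  push_cast
  ring

lemma sw_trace_eq (s θ φ : ℝ) (A : Matrix (Fin 2) (Fin 2) ℂ) :
    Matrix.trace (A * swKernel s θ φ) =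
      (1/(2*(Real.pi:ℂ))) * ((A 0 0 + A 1 1)/2 +
        (lam s : ℂ) * (((A 0 0 - A 1 1)/2) * (Real.cos θ : ℂ) +
          ((A 0 1 * Complex.exp (Complex.I*(φ:ℂ)) + A 1 0 * Complex.exp (-(Complex.I*(φ:ℂ))))/2)
            * (Real.sin θ : ℂ))) := by
  have hconj : (starRingEnd ℂ) (Complex.exp (Complex.I*(φ:ℂ))) = Complex.exp (-(Complex.I*(φ:ℂ))) := by
    rw [← Complex.exp_conj, _root_.map_mul, Complex.conj_I, Complex.conj_ofReal, neg_mul]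
  have h1 : ((Real.cos (θ/2) : ℝ) : ℂ)^2 = (1 + (Real.cos θ : ℂ))/2 := by
    have hr : Real.cos (θ/2)^2 = (1 + Real.cos θ)/2 := by
      rw [Real.cos_sq, show 2*(θ/2) = θ by ring]; ring
    rw [← Complex.ofReal_pow, hr]; push_cast; ring
  have h2 : ((Real.sin (θ/2) : ℝ) : ℂ)^2 = (1 - (Real.cos θ : ℂ))/2 := by
    have hr : Real.sin (θ/2)^2 = (1 - Real.cos θ)/2 := by
      have := Real.sin_sq_add_cos_sq (θ/2)
      have h := Real.cos_sq (θ/2)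
      rw [show 2*(θ/2) = θ by ring] at h
      nlinarith
    rw [← Complex.ofReal_pow, hr]; push_cast; ring
  have h3 : ((Real.cos (θ/2) : ℝ) : ℂ) * ((Real.sin (θ/2) : ℝ) : ℂ) = (Real.sin θ : ℂ)/2 := by
    have hr : Real.cos (θ/2) * Real.sin (θ/2) = Real.sin θ / 2 := by
      have := Real.sin_two_mul (θ/2)
      rw [show 2*(θ/2) = θ by ring] at this
      linarith
    rw [← Complex.ofReal_mul, hr]; push_cast; ring
  simp only [Matrix.trace, Matrix.diag, Fin.sum_univ_two, Matrix.mul_apply, swKernel,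
    Matrix.smul_apply, Matrix.sub_apply, Matrix.one_apply, Matrix.of_apply, cohVec,
    Matrix.cons_val_zero, Matrix.cons_val_one, Matrix.head_cons, smul_eq_mul, _root_.map_mul,
    Complex.conj_ofReal, hconj]
  have hE : Complex.exp (Complex.I*(φ:ℂ)) * Complex.exp (-(Complex.I*(φ:ℂ))) = 1 := by
    rw [← Complex.exp_add]; simp
  push_cast at h1 h2 h3 ⊢
  linear_combination ((1/(2*(Real.pi:ℂ))) * (lam s : ℂ) * A 0 0) * h1 +
    ((1/(2*(Real.pi:ℂ))) * (lam s : ℂ) * A 1 1) * h2 +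
    ((1/(2*(Real.pi:ℂ))) * (lam s : ℂ) * (A 0 1 * Complex.exp (Complex.I*(φ:ℂ)) + A 1 0 * Complex.exp (-(Complex.I*(φ:ℂ))))) * h3 +
    ((1/(2*(Real.pi:ℂ))) * (lam s : ℂ) * A 1 1 * Complex.sin ((θ:ℂ)/2)^2) * hE

lemma int_exp_int (n : ℤ) (hn : n ≠ 0) :
    (∫ φ in (0:ℝ)..(2*Real.pi), Complex.exp ((n:ℂ)*Complex.I*(φ:ℂ))) = 0 := by
  rw [integral_exp_mul_complex (mul_ne_zero (Int.cast_ne_zero.mpr hn) Complex.I_ne_zero)]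
  have h2 : ((n:ℂ)*Complex.I) * (((2*Real.pi:ℝ)):ℂ) = (n:ℂ) * (2*(Real.pi:ℂ)*Complex.I) := by
    push_cast; ring
  rw [h2, Complex.exp_int_mul_two_pi_mul_I]
  simp

lemma int_E1 : (∫ φ in (0:ℝ)..(2*Real.pi), Complex.exp (Complex.I*(φ:ℂ))) = 0 := by
  simpa using int_exp_int 1 one_ne_zero

lemma int_E1' : (∫ φ in (0:ℝ)..(2*Real.pi), Complex.exp (-(Complex.I*(φ:ℂ)))) = 0 := by
  simpa [neg_mul] using int_exp_int (-1) (by norm_num)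

lemma int_E2 : (∫ φ in (0:ℝ)..(2*Real.pi), Complex.exp (Complex.I*(φ:ℂ))^2) = 0 := by
  rw [← int_exp_int 2 (by norm_num)]
  refine intervalIntegral.integral_congr fun φ _ => ?_
  rw [← Complex.exp_nat_mul]
  norm_num
  ring_nf

lemma int_E2' : (∫ φ in (0:ℝ)..(2*Real.pi), Complex.exp (-(Complex.I*(φ:ℂ)))^2) = 0 := by
  rw [← int_exp_int (-2) (by norm_num)]
  refine intervalIntegral.integral_congr fun φ _ => ?_
  rw [← Complex.exp_nat_mul]
  norm_num
  ring_nf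

/-- traciality (dual pairing) of the Stratonovich–Weyl correspondence:
Tr(AB) = 2π ∫ Tr[A Δ^{(s)}(θ,φ)] Tr[B Δ^{(−s)}(θ,φ)] sinθ dθ dφ. -/
theorem sw_traciality (s : ℝ) (hs : s ∈ Set.Icc (-1 : ℝ) 1)
    (A B : Matrix (Fin 2) (Fin 2) ℂ) :
    Matrix.trace (A * B) =
      (2 * Real.pi : ℂ) *
        ∫ φ in (0:ℝ)..(2 * Real.pi), ∫ θ in (0:ℝ)..Real.pi,
          Matrix.trace (A * swKernel s θ φ) * Matrix.trace (B * swKernel (-s) θ φ)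
            * ((Real.sin θ : ℝ) : ℂ) := by
  have hπ : (Real.pi : ℂ) ≠ 0 := Complex.ofReal_ne_zero.mpr Real.pi_ne_zero
  set L : ℂ := (lam s : ℂ) with hL
  set L' : ℂ := (lam (-s) : ℂ) with hL'
  have hLL' : L * L' = 3 := by
    rw [hL, hL', ← Complex.ofReal_mul, lam_mul]; norm_num
  set pA : ℂ := (A 0 0 + A 1 1)/2 with hpA
  set pB : ℂ := (B 0 0 + B 1 1)/2 with hpB
  set dA : ℂ := (A 0 0 - A 1 1)/2 with hdA
  set dB : ℂ := (B 0 0 - B 1 1)/2 with hdB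
  set gA : ℝ → ℂ := fun φ =>
    (A 0 1 * Complex.exp (Complex.I*(φ:ℂ)) + A 1 0 * Complex.exp (-(Complex.I*(φ:ℂ))))/2 with hgA
  set gB : ℝ → ℂ := fun φ =>
    (B 0 1 * Complex.exp (Complex.I*(φ:ℂ)) + B 1 0 * Complex.exp (-(Complex.I*(φ:ℂ))))/2 with hgB
  have key : ∀ φ : ℝ,
      (∫ θ in (0:ℝ)..Real.pi,
        Matrix.trace (A * swKernel s θ φ) * Matrix.trace (B * swKernel (-s) θ φ)
          * ((Real.sin θ : ℝ) : ℂ))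
      = (1/(2*(Real.pi:ℂ)))^2 * (2*(pA*pB) + (2/3)*((L*dA)*(L'*dB)) +
          (4/3)*((L*gA φ)*(L'*gB φ)) + ((Real.pi:ℂ)/2)*(pA*(L'*gB φ) + pB*(L*gA φ))) := by
    intro φ
    have hcg : Set.EqOn (fun θ : ℝ =>
        Matrix.trace (A * swKernel s θ φ) * Matrix.trace (B * swKernel (-s) θ φ)
          * ((Real.sin θ : ℝ) : ℂ))
        (fun θ : ℝ => (1/(2*(Real.pi:ℂ)))^2 *
          ((pA + (L*dA) * (Real.cos θ : ℂ) + (L*gA φ) * (Real.sin θ : ℂ)) *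
           (pB + (L'*dB) * (Real.cos θ : ℂ) + (L'*gB φ) * (Real.sin θ : ℂ)) *
             (Real.sin θ : ℂ))) (Set.uIcc 0 Real.pi) := by
      intro θ _
      simp only [sw_trace_eq, hpA, hpB, hdA, hdB, hgA, hgB, hL, hL']
      ring
    rw [intervalIntegral.integral_congr hcg, intervalIntegral.integral_const_mul, inner_int]
  rw [intervalIntegral.integral_congr (fun φ _ => key φ)]
  have hsplit : Set.EqOn (fun φ : ℝ =>
      (1/(2*(Real.pi:ℂ)))^2 * (2*(pA*pB) + (2/3)*((L*dA)*(L'*dB)) +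
          (4/3)*((L*gA φ)*(L'*gB φ)) + ((Real.pi:ℂ)/2)*(pA*(L'*gB φ) + pB*(L*gA φ))))
      (fun φ : ℝ =>
        ((1/(2*(Real.pi:ℂ)))^2 * (2*(pA*pB) + (2/3)*(L*L')*(dA*dB) +
            (1/3)*(L*L')*(A 0 1 * B 1 0 + A 1 0 * B 0 1))) +
        (((1/(2*(Real.pi:ℂ)))^2 * ((Real.pi:ℂ)/4) * (pA*L'*B 0 1 + pB*L*A 0 1)) *
            Complex.exp (Complex.I*(φ:ℂ)) +
        (((1/(2*(Real.pi:ℂ)))^2 * ((Real.pi:ℂ)/4) * (pA*L'*B 1 0 + pB*L*A 1 0)) *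
            Complex.exp (-(Complex.I*(φ:ℂ))) +
        (((1/(2*(Real.pi:ℂ)))^2 * (1/3)*(L*L')*(A 0 1 * B 0 1)) *
            Complex.exp (Complex.I*(φ:ℂ))^2 +
        ((1/(2*(Real.pi:ℂ)))^2 * (1/3)*(L*L')*(A 1 0 * B 1 0)) *
            Complex.exp (-(Complex.I*(φ:ℂ)))^2)))) (Set.uIcc 0 (2*Real.pi)) := by
    intro φ _
    have hE : Complex.exp (Complex.I*(φ:ℂ)) * Complex.exp (-(Complex.I*(φ:ℂ))) = 1 := by
      rw [← Complex.exp_add]; simp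
    simp only [hgA, hgB]
    linear_combination ((1/(2*(Real.pi:ℂ)))^2 * (1/3) * (L*L') *
      (A 0 1 * B 1 0 + A 1 0 * B 0 1)) * hE
  rw [intervalIntegral.integral_congr hsplit]
  rw [intervalIntegral.integral_add (by exact Continuous.intervalIntegrable (by fun_prop) _ _) (by exact Continuous.intervalIntegrable (by fun_prop) _ _),
      intervalIntegral.integral_add (by exact Continuous.intervalIntegrable (by fun_prop) _ _) (by exact Continuous.intervalIntegrable (by fun_prop) _ _),
      intervalIntegral.integral_add (by exact Continuous.intervalIntegrable (by fun_prop) _ _) (by exact Continuous.intervalIntegrable (by fun_prop) _ _),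
      intervalIntegral.integral_add (by exact Continuous.intervalIntegrable (by fun_prop) _ _) (by exact Continuous.intervalIntegrable (by fun_prop) _ _)]
  simp only [intervalIntegral.integral_const_mul, int_E1, int_E1', int_E2, int_E2',
    intervalIntegral.integral_const, mul_zero, add_zero, sub_zero, smul_eq_mul, Complex.real_smul]
  have htr : Matrix.trace (A * B) =
      A 0 0 * B 0 0 + A 0 1 * B 1 0 + A 1 0 * B 0 1 + A 1 1 * B 1 1 := by
    simp [Matrix.trace, Matrix.diag, Matrix.mul_apply, Fin.sum_univ_two]
    ring
  rw [htr]
  push_cast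
  field_simp
  linear_combination (-(2*(dA*dB) + (A 0 1 * B 1 0 + A 1 0 * B 0 1))) * hLL'
end
end

section
/- For every 2×2 complex matrix ρ and all θ ∈ (0,π), φ ∈ ℝ, the Husimi Q function satisfies the Laplace–Beltrami eigenvalue relation (1/sinθ)·∂/∂θ( sinθ · ∂Q_ρ/∂θ ) + (1/sin²θ)·∂²Q_ρ/∂φ² = −2·( Q_ρ(θ,φ) − Tr(ρ)/(4π) ); that is, the non-constant part of any one-qubit quasi-probability function lies entirely in the ℓ = 1 eigenspace of the spherical Laplacian, which is the spectral fact underlying the heat-kernel (diffusion) maps between the Q, Wigner, and P representations. -/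
open Matrix Complex Real MeasureTheory

noncomputable section

/-- The Husimi Q function of a 2×2 complex matrix. -/
def Qfun (A : Matrix (Fin 2) (Fin 2) ℂ) (θ φ : ℝ) : ℂ :=
  (1 / (2 * Real.pi) : ℂ) *
    ∑ k, ∑ l, (starRingEnd ℂ) (cohVec θ φ k) * A k l * cohVec θ φ l

lemma Qfun_closed (ρ : Matrix (Fin 2) (Fin 2) ℂ) (θ φ : ℝ) :
    Qfun ρ θ φ = (1/(4*(Real.pi:ℂ))) * ( (ρ 0 0 + ρ 1 1)
      + (ρ 0 0 - ρ 1 1) * Complex.cos θ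
      + (ρ 0 1 * Complex.exp (Complex.I*φ) + ρ 1 0 * Complex.exp (-(Complex.I*φ))) * Complex.sin θ ) := by
  have e2 : (2:ℂ) * ((θ:ℂ)/2) = (θ:ℂ) := by ring
  have h1 : Complex.cos (θ/2 : ℂ)^2 = 1/2 + Complex.cos θ / 2 := by
    rw [Complex.cos_sq, e2]
  have h2 : Complex.sin (θ/2 : ℂ)^2 = 1/2 - Complex.cos θ / 2 := by
    rw [Complex.sin_sq, h1]; ring
  have h3 : Complex.sin (θ/2 : ℂ) * Complex.cos (θ/2 : ℂ) = Complex.sin θ / 2 := by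
    have := Complex.sin_two_mul (θ/2 : ℂ)
    rw [e2] at this
    linear_combination -this / 2
  have hc : (starRingEnd ℂ) (Complex.exp (Complex.I * φ)) = Complex.exp (-(Complex.I * φ)) := by
    rw [← Complex.exp_conj]; simp
  have hpi : (Real.pi : ℂ) ≠ 0 := by exact_mod_cast Real.pi_ne_zero
  simp only [Qfun, cohVec, Fin.sum_univ_two, Matrix.cons_val_zero, Matrix.cons_val_one,
    Matrix.head_cons, _root_.map_mul, hc, Complex.conj_ofReal]
  push_cast [Complex.ofReal_cos, Complex.ofReal_sin]
  have he : Complex.exp (-(Complex.I*φ)) * Complex.exp (Complex.I*φ) = 1 := by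
    rw [← Complex.exp_add]; simp
  field_simp
  linear_combination (4 : ℂ) * ((ρ 0 0) * h1 + (ρ 1 1) * h2) + (4 : ℂ) * (ρ 1 1) * Complex.sin (θ/2 : ℂ)^2 * he + (4 : ℂ) * (
    (ρ 0 1 * Complex.exp (Complex.I*φ) + ρ 1 0 * Complex.exp (-(Complex.I*φ))) * h3)


lemma trig_hasDerivAt (A B S : ℂ) (t : ℝ) :
    HasDerivAt (fun t' : ℝ => A + B * Complex.cos t' + S * Complex.sin t')
      (B * (-Complex.sin t) + S * Complex.cos t) t := by
  have h1 := ((Complex.hasDerivAt_cos (t:ℂ)).comp_ofReal).const_mul B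
  have h2 := ((Complex.hasDerivAt_sin (t:ℂ)).comp_ofReal).const_mul S
  simpa [Pi.add_def] using ((hasDerivAt_const t A).add h1).add h2

lemma exp_hasDerivAt (c : ℂ) (p : ℝ) :
    HasDerivAt (fun p' : ℝ => Complex.exp (c * p')) (c * Complex.exp (c * p)) p := by
  have := ((Complex.hasDerivAt_exp (c * p)).comp ((p:ℂ))
      ((hasDerivAt_id ((p:ℂ))).const_mul c)).comp_ofReal
  simpa [mul_comm, Function.comp] using this

/-- Laplace–Beltrami eigenvalue relation for the Q function:
(1/sinθ)·∂_θ(sinθ·∂_θQ_ρ) + (1/sin²θ)·∂²_φ Q_ρ = −2·(Q_ρ − Tr(ρ)/(4π)). -/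
theorem q_function_laplace_beltrami_relation (ρ : Matrix (Fin 2) (Fin 2) ℂ)
    (θ φ : ℝ) (hθ : θ ∈ Set.Ioo (0 : ℝ) Real.pi) :
    ((1 / Real.sin θ : ℝ) : ℂ) *
        deriv (fun t => ((Real.sin t : ℝ) : ℂ) * deriv (fun t' => Qfun ρ t' φ) t) θ
      + ((1 / (Real.sin θ) ^ 2 : ℝ) : ℂ) *
        deriv (fun p => deriv (fun p' => Qfun ρ θ p') p) φ
    = -2 * (Qfun ρ θ φ - Matrix.trace ρ / ((4 * Real.pi : ℝ) : ℂ)) := by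
  obtain ⟨hθ0, hθπ⟩ := hθ
  have hsin : Real.sin θ ≠ 0 := ne_of_gt (Real.sin_pos_of_pos_of_lt_pi hθ0 hθπ)
  have hsinC : Complex.sin (θ:ℂ) ≠ 0 := by
    rw [← Complex.ofReal_sin]; exact_mod_cast hsin
  set c : ℂ := (1/(4*(Real.pi:ℂ))) with hc
  set T : ℂ := ρ 0 0 + ρ 1 1 with hT
  set B : ℂ := ρ 0 0 - ρ 1 1 with hB
  set S : ℂ := ρ 0 1 * Complex.exp (Complex.I*φ) + ρ 1 0 * Complex.exp (-(Complex.I*φ)) with hS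
  -- θ part
  have hfθ : (fun t' : ℝ => Qfun ρ t' φ)
      = fun t' : ℝ => c * T + (c*B) * Complex.cos t' + (c*S) * Complex.sin t' := by
    funext t; rw [Qfun_closed]; ring
  have hinner : ∀ t : ℝ, deriv (fun t' : ℝ => Qfun ρ t' φ) t
      = (c*B) * (-Complex.sin t) + (c*S) * Complex.cos t := by
    intro t; rw [hfθ]; exact (trig_hasDerivAt _ _ _ t).deriv
  have houter : (fun t : ℝ => ((Real.sin t : ℝ) : ℂ) * deriv (fun t' => Qfun ρ t' φ) t)
      = fun t : ℝ => Complex.sin t * ((c*B) * (-Complex.sin t) + (c*S) * Complex.cos t) := by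
    funext t; rw [hinner, Complex.ofReal_sin]
  have hD1 : HasDerivAt (fun t : ℝ => Complex.sin (t:ℂ) * ((c*B) * (-Complex.sin (t:ℂ)) + (c*S) * Complex.cos (t:ℂ)))
      (Complex.cos θ * ((c*B) * (-Complex.sin θ) + (c*S) * Complex.cos θ)
        + Complex.sin θ * ((c*B) * (-Complex.cos θ) + (c*S) * (-Complex.sin θ))) θ := by
    have hs := (Complex.hasDerivAt_sin (θ:ℂ)).comp_ofReal
    have h2 : HasDerivAt (fun t : ℝ => (c*B) * (-Complex.sin (t:ℂ)) + (c*S) * Complex.cos (t:ℂ))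
        ((c*B) * (-Complex.cos θ) + (c*S) * (-Complex.sin θ)) θ := by
      have ha := (((Complex.hasDerivAt_sin (θ:ℂ)).comp_ofReal).const_mul (c*B)).neg
      have hb := ((Complex.hasDerivAt_cos (θ:ℂ)).comp_ofReal).const_mul (c*S)
      simpa [mul_comm, neg_mul, mul_neg, Pi.add_def, Pi.neg_def] using ha.add hb
    simpa [Pi.mul_def] using hs.mul h2
  have hθterm : deriv (fun t => ((Real.sin t : ℝ) : ℂ) * deriv (fun t' => Qfun ρ t' φ) t) θ
      = Complex.cos θ * ((c*B) * (-Complex.sin θ) + (c*S) * Complex.cos θ)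
        + Complex.sin θ * ((c*B) * (-Complex.cos θ) + (c*S) * (-Complex.sin θ)) := by
    rw [houter]; exact hD1.deriv
  -- φ part
  have hfφ : ∀ p : ℝ, deriv (fun p' : ℝ => Qfun ρ θ p') p
      = (c * Complex.sin θ) * (ρ 0 1 * (Complex.I * Complex.exp (Complex.I*p))
          + ρ 1 0 * (-Complex.I * Complex.exp (-Complex.I*p))) := by
    intro p
    have hfn : (fun p' : ℝ => Qfun ρ θ p')
        = fun p' : ℝ => c * (T + B * Complex.cos θ)
          + (c * Complex.sin θ * (ρ 0 1)) * Complex.exp (Complex.I * p')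
          + (c * Complex.sin θ * (ρ 1 0)) * Complex.exp (-Complex.I * p') := by
      funext p'; rw [Qfun_closed, hc, hT, hB]; ring_nf
    rw [hfn]
    have h1 := (exp_hasDerivAt Complex.I p).const_mul (c * Complex.sin θ * (ρ 0 1))
    have h2 := (exp_hasDerivAt (-Complex.I) p).const_mul (c * Complex.sin θ * (ρ 1 0))
    have := ((hasDerivAt_const p (c * (T + B * Complex.cos (θ:ℂ)))).add h1).add h2
    refine this.deriv.trans ?_; ring
  have hφterm : deriv (fun p => deriv (fun p' : ℝ => Qfun ρ θ p') p) φ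
      = (c * Complex.sin θ) * (ρ 0 1 * (-Complex.exp (Complex.I*φ))
          + ρ 1 0 * (-Complex.exp (-Complex.I*φ))) := by
    have hfn : (fun p : ℝ => deriv (fun p' : ℝ => Qfun ρ θ p') p)
        = fun p : ℝ => (c * Complex.sin θ * (ρ 0 1) * Complex.I) * Complex.exp (Complex.I * p)
          + (c * Complex.sin θ * (ρ 1 0) * (-Complex.I)) * Complex.exp (-Complex.I * p) := by
      funext p; rw [hfφ]; ring
    rw [hfn]
    have h1 := (exp_hasDerivAt Complex.I φ).const_mul (c * Complex.sin (θ:ℂ) * (ρ 0 1) * Complex.I)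
    have h2 := (exp_hasDerivAt (-Complex.I) φ).const_mul (c * Complex.sin (θ:ℂ) * (ρ 1 0) * (-Complex.I))
    refine (h1.add h2).deriv.trans ?_
    simp [Complex.I_sq]; ring_nf
    simp [Complex.I_sq]; ring
  -- assemble
  rw [hθterm, hφterm, Qfun_closed]
  have htr : Matrix.trace ρ = T := by
    simp [Matrix.trace, Fin.sum_univ_two, hT, Matrix.diag]
  rw [htr]
  have hpyth : Complex.sin (θ:ℂ)^2 + Complex.cos (θ:ℂ)^2 = 1 := Complex.sin_sq_add_cos_sq _
  have hpi : (Real.pi : ℂ) ≠ 0 := by exact_mod_cast Real.pi_ne_zero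
  push_cast [Complex.ofReal_sin]
  rw [hc]
  field_simp [hsinC, hpi]
  linear_combination S * hpyth + hS
end
end
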